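/- arXiv:1505.02370 — 9 statements merged into one kernel-verified Lean document; each statement's English description precedes it below -/
import Mathlib

section
/- Let d be a positive integer and let V be an ℝ-linear subspace of the polynomial ring ℝ[x₁,…,x_d] that is both translation invariant and dilation invariant. If (p_n) is a sequence of polynomials in V and p is a polynomial such that for every x ∈ ℝ^d the sequence of values p_n(x) converges to p(x), then p belongs to V. -/
open MvPolynomial Filter

lemma vand_mem {M : Type*} [AddCommGroup M] [Module ℝ M] (V : Submodule ℝ M)
    (n : ℕ) (c : Fin n → M)
    (h : ∀ t : ℝ, (∑ k : Fin n, t ^ (k : ℕ) • c k) ∈ V) (k : Fin n) : c k ∈ V := by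
  set v : Fin n → ℝ := fun j => (j : ℕ) with hv
  have hinj : Function.Injective v := by
    intro a b hab
    exact Fin.ext (Nat.cast_injective hab)
  set A := Matrix.vandermonde v with hA
  have hdet : IsUnit A.det := by
    rw [isUnit_iff_ne_zero, hA, Matrix.det_vandermonde_ne_zero_iff]
    exact hinj
  have hBA : A⁻¹ * A = 1 := Matrix.nonsing_inv_mul A hdet
  have key : c k = ∑ j, A⁻¹ k j • ∑ l, A j l • c l := by
    calc c k = ∑ l, ((1 : Matrix (Fin n) (Fin n) ℝ) k l) • c l := by
          simp [Matrix.one_apply, Finset.sum_ite_eq]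
      _ = ∑ l, ((A⁻¹ * A) k l) • c l := by rw [hBA]
      _ = ∑ l, (∑ j, A⁻¹ k j * A j l) • c l := by simp [Matrix.mul_apply]
      _ = ∑ l, ∑ j, (A⁻¹ k j * A j l) • c l := by simp [Finset.sum_smul]
      _ = ∑ j, ∑ l, (A⁻¹ k j * A j l) • c l := Finset.sum_comm
      _ = ∑ j, A⁻¹ k j • ∑ l, A j l • c l := by
          simp [Finset.smul_sum, smul_smul]
  rw [key]
  refine Submodule.sum_mem V fun j _ => Submodule.smul_mem V _ ?_
  have : ∑ l, A j l • c l = ∑ l : Fin n, (v j) ^ (l : ℕ) • c l := by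
    simp [hA, Matrix.vandermonde]
  rw [this]
  exact h (v j)

lemma Slem (b : ℕ) : ∀ (f : Polynomial ℝ), f.natDegree ≤ b →
    ∑ k ∈ Finset.range (b+1), (-1:ℝ)^(b+k) * (b.choose k) * f.eval (k:ℝ) = b.factorial * f.coeff b := by
  induction b with
  | zero =>
    intro f hf
    rw [Finset.sum_range_one]
    simp [Polynomial.coeff_zero_eq_eval_zero]
  | succ b IH =>
    intro f hf
    set g : Polynomial ℝ := Polynomial.taylor 1 f - f with hg
    have hgeval : ∀ t : ℝ, g.eval t = f.eval (t+1) - f.eval t := by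
      intro t; simp [hg, Polynomial.taylor_eval]
    have hgd : g.natDegree ≤ b := by
      rw [Polynomial.natDegree_le_iff_coeff_eq_zero]
      intro N hN
      rcases eq_or_lt_of_le (Nat.succ_le_of_lt hN) with hE | hL
      · -- N = b + 1
        have hhd : Polynomial.hasseDeriv (b+1) f = Polynomial.C (f.coeff (b+1)) := by
          ext n
          rw [Polynomial.hasseDeriv_coeff]
          cases n with
          | zero => simp
          | succ m =>
            have h1 : f.coeff (m + 1 + (b+1)) = 0 :=
              Polynomial.coeff_eq_zero_of_natDegree_lt (by omega)
            simp [h1]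
        have : g.coeff N = 0 := by
          rw [hg, Polynomial.coeff_sub, ← hE, Polynomial.taylor_coeff, hhd]
          simp
        exact this
      · have h1 : (Polynomial.taylor 1 f).coeff N = 0 :=
          Polynomial.coeff_eq_zero_of_natDegree_lt (by rw [Polynomial.natDegree_taylor]; omega)
        have h2 : f.coeff N = 0 := Polynomial.coeff_eq_zero_of_natDegree_lt (by omega)
        simp [hg, h1, h2]
    have hgb : g.coeff b = (b+1 : ℝ) * f.coeff (b+1) := by
      have hhd : Polynomial.hasseDeriv b f
          = Polynomial.C (f.coeff b) + Polynomial.C ((b+1 : ℝ) * f.coeff (b+1)) * Polynomial.X := by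
        ext n
        rw [Polynomial.hasseDeriv_coeff]
        match n with
        | 0 => simp
        | 1 =>
          rw [add_comm 1 b, Nat.choose_succ_self_right]
          simp
        | (m+2) =>
          have h1 : f.coeff (m + 2 + b) = 0 :=
            Polynomial.coeff_eq_zero_of_natDegree_lt (by omega)
          simp [h1, Polynomial.coeff_one]
      rw [hg, Polynomial.coeff_sub, Polynomial.taylor_coeff, hhd]
      simp
    have hIH := IH g hgd
    set F : ℕ → ℝ := fun k => f.eval (k:ℝ) with hF
    set G : ℕ → ℝ := fun k => (-1:ℝ)^(b+k) * (b.choose k) * F k with hG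
    have hgev : ∀ k : ℕ, g.eval (k:ℝ) = F (k+1) - F k := by
      intro k
      rw [hgeval (k:ℝ), hF]
      norm_num
    have hBD : ∑ k ∈ Finset.range (b+1),
        ((-1:ℝ)^(b+k) * (b.choose k) * F k + (-1:ℝ)^(b+k) * (b.choose (k+1)) * F (k+1))
        = (-1:ℝ)^b * F 0 := by
      have hterm : ∀ k : ℕ, (-1:ℝ)^(b+k) * (b.choose k) * F k
          + (-1:ℝ)^(b+k) * (b.choose (k+1)) * F (k+1) = G k - G (k+1) := by
        intro k
        rw [hG]
        simp only []
        rw [show b + (k+1) = (b+k) + 1 by ring, pow_succ]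
        ring
      rw [Finset.sum_congr rfl (fun k _ => hterm k), Finset.sum_range_sub' G (b+1)]
      have : G (b+1) = 0 := by
        rw [hG]; simp [Nat.choose_succ_self]
      rw [this, hG]
      simp
    have key : ∑ k ∈ Finset.range (b+2), (-1:ℝ)^(b+1+k) * (((b+1).choose k : ℕ) : ℝ) * F k
        = ∑ k ∈ Finset.range (b+1), (-1:ℝ)^(b+k) * (b.choose k) * (F (k+1) - F k) := by
      rw [Finset.sum_range_succ' (fun k => (-1:ℝ)^(b+1+k) * (((b+1).choose k : ℕ) : ℝ) * F k) (b+1)]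
      have hterm2 : ∀ k : ℕ, (-1:ℝ)^(b+1+(k+1)) * (((b+1).choose (k+1) : ℕ) : ℝ) * F (k+1)
          = (-1:ℝ)^(b+k) * (b.choose k) * F (k+1) + (-1:ℝ)^(b+k) * (b.choose (k+1)) * F (k+1) := by
        intro k
        rw [Nat.choose_succ_succ' b k, show b+1+(k+1) = (b+k) + 2 by ring]
        push_cast
        ring
      rw [Finset.sum_congr rfl (fun k _ => hterm2 k)]
      rw [Finset.sum_add_distrib]
      have hsub : ∑ k ∈ Finset.range (b+1), (-1:ℝ)^(b+k) * (b.choose k) * (F (k+1) - F k)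
          = ∑ k ∈ Finset.range (b+1), (-1:ℝ)^(b+k) * (b.choose k) * F (k+1)
            - ∑ k ∈ Finset.range (b+1), (-1:ℝ)^(b+k) * (b.choose k) * F k := by
        rw [← Finset.sum_sub_distrib]
        congr 1; ext k; ring
      rw [hsub]
      have := hBD
      rw [Finset.sum_add_distrib] at this
      simp only [Nat.choose_zero_right, Nat.cast_one, mul_one, add_zero, Nat.add_zero, pow_zero] at *
      rw [pow_succ]
      linarith [this]
    have hcast : ∀ k, (((b+1).choose k : ℕ) : ℝ) = (((b+1).choose k : ℕ) : ℝ) := fun _ => rfl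
    calc ∑ k ∈ Finset.range (b+1+1), (-1:ℝ)^(b+1+k) * ((b+1).choose k) * F k
        = ∑ k ∈ Finset.range (b+1), (-1:ℝ)^(b+k) * (b.choose k) * (F (k+1) - F k) := key
      _ = ∑ k ∈ Finset.range (b+1), (-1:ℝ)^(b+k) * (b.choose k) * g.eval (k:ℝ) := by
          refine Finset.sum_congr rfl fun k _ => ?_
          rw [hgev k]
      _ = (b.factorial : ℝ) * g.coeff b := hIH
      _ = ((b+1).factorial : ℝ) * f.coeff (b+1) := by
          rw [hgb, Nat.factorial_succ]
          push_cast
          ring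


noncomputable def Fpoly {d : ℕ} (pr : (Fin d →₀ ℕ) → Prop) [DecidablePred pr]
    (q : MvPolynomial (Fin d) ℝ) : MvPolynomial (Fin d) ℝ :=
  ∑ β ∈ q.support.filter pr, monomial β (coeff β q)

lemma coeff_Fpoly {d : ℕ} (pr : (Fin d →₀ ℕ) → Prop) [DecidablePred pr]
    (q : MvPolynomial (Fin d) ℝ) (γ : Fin d →₀ ℕ) :
    coeff γ (Fpoly pr q) = if pr γ then coeff γ q else 0 := by
  classical
  rw [Fpoly]
  rw [MvPolynomial.coeff_sum]
  rw [Finset.sum_congr rfl (fun β _ => MvPolynomial.coeff_monomial γ β (coeff β q))]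
  rw [Finset.sum_ite_eq']
  by_cases h : γ ∈ q.support.filter pr
  · rw [if_pos h]
    rw [if_pos (Finset.mem_filter.mp h).2]
  · rw [if_neg h]
    by_cases hpr : pr γ
    · rw [if_pos hpr]
      have : γ ∉ q.support := fun hs => h (Finset.mem_filter.mpr ⟨hs, hpr⟩)
      exact (MvPolynomial.notMem_support_iff.mp this).symm
    · rw [if_neg hpr]

lemma dilate_eq {d : ℕ} (q : MvPolynomial (Fin d) ℝ) (y : Fin d → ℝ) :
    bind₁ (fun i => (C (y i) : MvPolynomial (Fin d) ℝ) * X i) q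
      = ∑ β ∈ q.support, (β.prod fun i k => y i ^ k) • monomial β (coeff β q) := by
  conv_lhs => rw [← support_sum_monomial_coeff q]
  rw [map_sum]
  refine Finset.sum_congr rfl fun β _ => ?_
  rw [bind₁_monomial, monomial_eq, MvPolynomial.smul_eq_C_mul]
  simp only [Finsupp.prod, mul_pow, Finset.prod_mul_distrib, map_prod, map_pow]
  ring

lemma dilate_slice {d : ℕ} (q : MvPolynomial (Fin d) ℝ) (i : Fin d) (t : ℝ) :
    bind₁ (fun j => (C (Function.update (fun _ => (1:ℝ)) i t j) : MvPolynomial (Fin d) ℝ) * X j) q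
      = ∑ k ∈ Finset.range (q.support.sup (fun β => β i) + 1),
          t ^ k • Fpoly (fun β => β i = k) q := by
  classical
  set N := q.support.sup (fun β => β i) with hN
  have hprod : ∀ β ∈ q.support,
      (β.prod fun j k => (Function.update (fun _ => (1:ℝ)) i t) j ^ k) = t ^ (β i) := by
    intro β _
    rw [Finsupp.prod]
    by_cases h : i ∈ β.support
    · rw [Finset.prod_eq_single i]
      · simp
      · intro j _ hj
        simp [Function.update_of_ne hj]
      · exact fun h' => absurd h h'
    · have hβ : β i = 0 := Finsupp.notMem_support_iff.mp h
      rw [hβ, pow_zero]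
      apply Finset.prod_eq_one
      intro j hj
      have hne : j ≠ i := fun e => h (e ▸ hj)
      simp [Function.update_of_ne hne]
  calc bind₁ (fun j => (C (Function.update (fun _ => (1:ℝ)) i t j) : MvPolynomial (Fin d) ℝ) * X j) q
      = ∑ β ∈ q.support, t ^ (β i) • monomial β (coeff β q) := by
        rw [dilate_eq]
        exact Finset.sum_congr rfl fun β hβ => by rw [hprod β hβ]
    _ = ∑ k ∈ Finset.range (N+1), ∑ β ∈ q.support.filter (fun β => β i = k),
          t ^ (β i) • monomial β (coeff β q) :=
        (Finset.sum_fiberwise_of_maps_to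
          (fun β hβ => Finset.mem_range.mpr (Nat.lt_succ_of_le (Finset.le_sup hβ))) _).symm
    _ = ∑ k ∈ Finset.range (N+1), t ^ k • Fpoly (fun β => β i = k) q := by
        refine Finset.sum_congr rfl fun k _ => ?_
        rw [Fpoly, Finset.smul_sum]
        refine Finset.sum_congr rfl fun β hβ => ?_
        rw [(Finset.mem_filter.mp hβ).2]


lemma slice_mem {d : ℕ} (V : Submodule ℝ (MvPolynomial (Fin d) ℝ))
    (hdil : ∀ p ∈ V, ∀ y : Fin d → ℝ,
      bind₁ (fun i => (C (y i) : MvPolynomial (Fin d) ℝ) * X i) p ∈ V)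
    (q : MvPolynomial (Fin d) ℝ) (hq : q ∈ V) (i : Fin d) (k : ℕ) :
    Fpoly (fun β => β i = k) q ∈ V := by
  classical
  set N := q.support.sup (fun β => β i) with hN
  by_cases hk : k < N + 1
  · have h' : ∀ t : ℝ, (∑ m : Fin (N+1), t ^ (m:ℕ) • Fpoly (fun β => β i = (m:ℕ)) q) ∈ V := by
      intro t
      rw [Fin.sum_univ_eq_sum_range (fun m => t ^ m • Fpoly (fun β => β i = m) q) (N+1)]
      rw [← dilate_slice q i t]
      exact hdil q hq _
    exact vand_mem V (N+1) _ h' ⟨k, hk⟩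
  · have hz : Fpoly (fun β => β i = k) q = 0 := by
      rw [Fpoly]
      apply Finset.sum_eq_zero
      intro β hβ
      rcases Finset.mem_filter.mp hβ with ⟨hs, he⟩
      have hle : β i ≤ N := Finset.le_sup (f := fun β => β i) hs
      omega
    rw [hz]
    exact V.zero_mem

lemma part_mem {d : ℕ} (V : Submodule ℝ (MvPolynomial (Fin d) ℝ))
    (hdil : ∀ p ∈ V, ∀ y : Fin d → ℝ,
      bind₁ (fun i => (C (y i) : MvPolynomial (Fin d) ℝ) * X i) p ∈ V)
    (s : Finset (Fin d)) :
    ∀ q ∈ V, ∀ β₀ : Fin d →₀ ℕ,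
      Fpoly (fun β => ∀ j ∈ s, β j = β₀ j) q ∈ V := by
  classical
  induction s using Finset.induction_on with
  | empty =>
    intro q hq β₀
    have he : Fpoly (fun β => ∀ j ∈ (∅ : Finset (Fin d)), β j = β₀ j) q = q := by
      apply MvPolynomial.ext
      intro γ
      rw [coeff_Fpoly]
      simp
    rwa [he]
  | insert i s hi IH =>
    intro q hq β₀
    have h1 := slice_mem V hdil _ (IH q hq β₀) i (β₀ i)
    have h2 : Fpoly (fun β => ∀ j ∈ insert i s, β j = β₀ j) q
        = Fpoly (fun β => β i = β₀ i) (Fpoly (fun β => ∀ j ∈ s, β j = β₀ j) q) := by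
      apply MvPolynomial.ext
      intro γ
      rw [coeff_Fpoly, coeff_Fpoly, coeff_Fpoly]
      by_cases ha : γ i = β₀ i <;> by_cases hb : ∀ j ∈ s, γ j = β₀ j <;>
        simp [Finset.forall_mem_insert, ha, hb]
    rw [h2]
    exact h1

lemma comp_mem {d : ℕ} (V : Submodule ℝ (MvPolynomial (Fin d) ℝ))
    (hdil : ∀ p ∈ V, ∀ y : Fin d → ℝ,
      bind₁ (fun i => (C (y i) : MvPolynomial (Fin d) ℝ) * X i) p ∈ V)
    (q : MvPolynomial (Fin d) ℝ) (hq : q ∈ V) (β₀ : Fin d →₀ ℕ) :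
    monomial β₀ (coeff β₀ q) ∈ V := by
  classical
  have h := part_mem V hdil Finset.univ q hq β₀
  have he : Fpoly (fun β => ∀ j ∈ Finset.univ, β j = β₀ j) q = monomial β₀ (coeff β₀ q) := by
    apply MvPolynomial.ext
    intro γ
    rw [coeff_Fpoly, MvPolynomial.coeff_monomial]
    by_cases hγ : γ = β₀
    · subst hγ
      simp
    · rw [if_neg (fun h' => hγ (Finsupp.ext (fun j => h' j (Finset.mem_univ j)))),
        if_neg (fun h' => hγ h'.symm)]
  rwa [he] at h

lemma mono_mem {d : ℕ} (V : Submodule ℝ (MvPolynomial (Fin d) ℝ))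
    (hdil : ∀ p ∈ V, ∀ y : Fin d → ℝ,
      bind₁ (fun i => (C (y i) : MvPolynomial (Fin d) ℝ) * X i) p ∈ V)
    (q : MvPolynomial (Fin d) ℝ) (hq : q ∈ V) (β₀ : Fin d →₀ ℕ) (h0 : coeff β₀ q ≠ 0) :
    monomial β₀ (1:ℝ) ∈ V := by
  have h := V.smul_mem (coeff β₀ q)⁻¹ (comp_mem V hdil q hq β₀)
  rwa [MvPolynomial.smul_monomial, smul_eq_mul, inv_mul_cancel₀ h0] at h

lemma erase_add_single_eq_update {d : ℕ} (β : Fin d →₀ ℕ) (i : Fin d) (m : ℕ) :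
    β.erase i + Finsupp.single i m = β.update i m := by
  ext j
  by_cases hj : j = i
  · subst hj
    simp [Finsupp.add_apply, Finsupp.erase_same, Finsupp.single_eq_same]
  · simp [Finsupp.add_apply, Finsupp.erase_ne hj, Finsupp.single_eq_of_ne' (Ne.symm hj),
      Function.update_of_ne hj]

lemma translate_monomial_single {d : ℕ} (β : Fin d →₀ ℕ) (i : Fin d) :
    bind₁ (fun j => (X j : MvPolynomial (Fin d) ℝ) + (C ((Pi.single i (1:ℝ) : Fin d → ℝ) j) : MvPolynomial (Fin d) ℝ)) (monomial β 1)
      = ∑ m ∈ Finset.range (β i + 1), ((β i).choose m : ℝ) • monomial (β.update i m) (1:ℝ) := by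
  classical
  have hsplit : monomial β (1:ℝ) = monomial (β.erase i) 1 * monomial (Finsupp.single i (β i)) 1 := by
    rw [MvPolynomial.monomial_mul, one_mul, Finsupp.erase_add_single]
  have h1 : bind₁ (fun j => (X j : MvPolynomial (Fin d) ℝ) + (C ((Pi.single i (1:ℝ) : Fin d → ℝ) j) : MvPolynomial (Fin d) ℝ))
      (monomial (β.erase i) 1) = monomial (β.erase i) 1 := by
    rw [bind₁_monomial, monomial_eq, C_1, one_mul, one_mul]
    simp only [Finsupp.prod]
    refine Finset.prod_congr rfl fun j hj => ?_
    have hne : j ≠ i := by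
      rw [Finsupp.support_erase] at hj
      exact (Finset.mem_erase.mp hj).1
    rw [show (Pi.single i (1:ℝ) : Fin d → ℝ) j = 0 from Pi.single_eq_of_ne hne 1, map_zero, add_zero]
  have h2 : bind₁ (fun j => (X j : MvPolynomial (Fin d) ℝ) + (C ((Pi.single i (1:ℝ) : Fin d → ℝ) j) : MvPolynomial (Fin d) ℝ))
      (monomial (Finsupp.single i (β i)) 1) = (X i + 1)^(β i) := by
    rw [bind₁_monomial, C_1, one_mul]
    by_cases h0 : β i = 0
    · rw [h0, Finsupp.single_zero, pow_zero]
      simp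
    · rw [Finsupp.support_single_ne_zero i h0, Finset.prod_singleton, Finsupp.single_eq_same]
      rw [show (Pi.single i (1:ℝ) : Fin d → ℝ) i = 1 from Pi.single_eq_same i 1, C_1]
  rw [hsplit, map_mul, h1, h2]
  rw [add_pow, Finset.mul_sum]
  refine Finset.sum_congr rfl fun m hm => ?_
  rw [one_pow, mul_one, X_pow_eq_monomial]
  rw [show ((((β i).choose m : ℕ)) : MvPolynomial (Fin d) ℝ) = C (((β i).choose m : ℕ) : ℝ) by
    push_cast; rfl]
  rw [show (monomial (Finsupp.single i m) (1:ℝ)) * C (((β i).choose m : ℕ) : ℝ)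
      = C (((β i).choose m : ℕ) : ℝ) * monomial (Finsupp.single i m) (1:ℝ) from mul_comm _ _]
  rw [MvPolynomial.C_mul_monomial, mul_one, MvPolynomial.monomial_mul,
    erase_add_single_eq_update, MvPolynomial.smul_monomial, smul_eq_mul, mul_one, one_mul]

lemma down1 {d : ℕ} (V : Submodule ℝ (MvPolynomial (Fin d) ℝ))
    (htrans : ∀ p ∈ V, ∀ y : Fin d → ℝ,
      bind₁ (fun i => (X i : MvPolynomial (Fin d) ℝ) + C (y i)) p ∈ V)
    (hdil : ∀ p ∈ V, ∀ y : Fin d → ℝ,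
      bind₁ (fun i => (C (y i) : MvPolynomial (Fin d) ℝ) * X i) p ∈ V)
    (β : Fin d →₀ ℕ) (hβ : monomial β (1:ℝ) ∈ V) (i : Fin d) (k : ℕ) (hk : k ≤ β i) :
    monomial (β.update i k) (1:ℝ) ∈ V := by
  classical
  have hq : bind₁ (fun j => (X j : MvPolynomial (Fin d) ℝ)
      + (C ((Pi.single i (1:ℝ) : Fin d → ℝ) j) : MvPolynomial (Fin d) ℝ)) (monomial β 1) ∈ V :=
    htrans _ hβ _
  rw [translate_monomial_single] at hq
  have h2 := comp_mem V hdil _ hq (β.update i k)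
  have hco : coeff (β.update i k)
      (∑ m ∈ Finset.range (β i + 1), ((β i).choose m : ℝ) • monomial (β.update i m) (1:ℝ))
      = ((β i).choose k : ℝ) := by
    rw [MvPolynomial.coeff_sum]
    have hterm : ∀ m ∈ Finset.range (β i + 1),
        coeff (β.update i k) (((β i).choose m : ℝ) • monomial (β.update i m) (1:ℝ))
          = if m = k then ((β i).choose m : ℝ) else 0 := by
      intro m _
      rw [MvPolynomial.coeff_smul, MvPolynomial.coeff_monomial]
      by_cases hmk : m = k
      · subst hmk
        simp
      · have : β.update i m ≠ β.update i k := by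
          intro he
          apply hmk
          have := congrArg (fun f => f i) he
          simpa using this
        rw [if_neg this, if_neg hmk, smul_zero]
    rw [Finset.sum_congr rfl hterm, Finset.sum_ite_eq' (Finset.range (β i + 1)) k
      (fun m => (((β i).choose m : ℕ) : ℝ))]
    rw [if_pos (Finset.mem_range.mpr (by omega))]
  rw [hco] at h2
  have hne : ((β i).choose k : ℝ) ≠ 0 := by
    have := Nat.choose_pos hk
    positivity
  have h3 := V.smul_mem ((β i).choose k : ℝ)⁻¹ h2
  rwa [MvPolynomial.smul_monomial, smul_eq_mul, inv_mul_cancel₀ hne] at h3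

lemma down {d : ℕ} (V : Submodule ℝ (MvPolynomial (Fin d) ℝ))
    (htrans : ∀ p ∈ V, ∀ y : Fin d → ℝ,
      bind₁ (fun i => (X i : MvPolynomial (Fin d) ℝ) + C (y i)) p ∈ V)
    (hdil : ∀ p ∈ V, ∀ y : Fin d → ℝ,
      bind₁ (fun i => (C (y i) : MvPolynomial (Fin d) ℝ) * X i) p ∈ V)
    (β : Fin d →₀ ℕ) (hβ : monomial β (1:ℝ) ∈ V) (γ : Fin d →₀ ℕ) (hγ : γ ≤ β) :
    monomial γ (1:ℝ) ∈ V := by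
  classical
  suffices H : ∀ s : Finset (Fin d), ∀ γ : Fin d →₀ ℕ, γ ≤ β →
      (∀ j, j ∉ s → γ j = β j) → monomial γ (1:ℝ) ∈ V by
    exact H Finset.univ γ hγ (fun j hj => absurd (Finset.mem_univ j) hj)
  intro s
  induction s using Finset.induction_on with
  | empty =>
    intro γ hle hout
    have : γ = β := Finsupp.ext fun j => hout j (Finset.notMem_empty j)
    rwa [this]
  | insert i s hi IH =>
    intro γ hle hout
    set γ' : Fin d →₀ ℕ := γ.update i (β i) with hγ'
    have hle' : γ' ≤ β := by
      rw [Finsupp.le_def]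
      intro j
      by_cases hj : j = i
      · subst hj
        simp [hγ']
      · simp only [hγ', Finsupp.coe_update, Function.update_of_ne hj]
        exact Finsupp.le_def.mp hle j
    have hout' : ∀ j, j ∉ s → γ' j = β j := by
      intro j hj
      by_cases hji : j = i
      · subst hji
        simp [hγ']
      · have : j ∉ insert i s := by
          simp [hji, hj]
        simp only [hγ', Finsupp.coe_update, Function.update_of_ne hji]
        exact hout j this
    have h1 := IH γ' hle' hout'
    have h2 := down1 V htrans hdil γ' h1 i (γ i) (by simp [hγ']; exact Finsupp.le_def.mp hle i)
    have : γ'.update i (γ i) = γ := by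
      ext j
      by_cases hj : j = i
      · subst hj; simp
      · simp [hγ', Function.update_of_ne hj]
    rwa [this] at h2


noncomputable def Lam {d : ℕ} (β : Fin d →₀ ℕ) (q : MvPolynomial (Fin d) ℝ) : ℝ :=
  ∑ k ∈ Fintype.piFinset (fun i => Finset.range (β i + 1)),
    (∏ i, ((-1:ℝ)^(β i + k i) * ((β i).choose (k i) : ℝ))) * eval (fun i => (k i : ℝ)) q

lemma Lam_monomial {d : ℕ} (β γ : Fin d →₀ ℕ) (c : ℝ) :
    Lam β (monomial γ c) = c * ∏ i, ∑ j ∈ Finset.range (β i + 1),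
      (-1:ℝ)^(β i + j) * ((β i).choose j : ℝ) * (j:ℝ)^(γ i) := by
  rw [Lam]
  rw [Finset.prod_univ_sum (fun i => Finset.range (β i + 1))
    (fun i j => (-1:ℝ)^(β i + j) * ((β i).choose j : ℝ) * (j:ℝ)^(γ i))]
  rw [Finset.mul_sum]
  refine Finset.sum_congr rfl fun k _ => ?_
  rw [MvPolynomial.eval_monomial, Finsupp.prod_pow]
  rw [Finset.prod_mul_distrib, mul_left_comm, Finset.prod_mul_distrib, ← Finset.prod_mul_distrib, ← Finset.prod_mul_distrib]

lemma Lam_factor {d : ℕ} (b g : ℕ) (hg : g ≤ b) :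
    ∑ j ∈ Finset.range (b+1), (-1:ℝ)^(b+j) * (b.choose j : ℝ) * (j:ℝ)^g
      = (b.factorial : ℝ) * (if g = b then 1 else 0) := by
  have h := Slem b (Polynomial.X ^ g) (by rw [Polynomial.natDegree_X_pow]; exact hg)
  rw [Polynomial.coeff_X_pow] at h
  rw [show (if g = b then (1:ℝ) else 0) = (if b = g then (1:ℝ) else 0) by
    by_cases hgb : g = b
    · rw [if_pos hgb, if_pos hgb.symm]
    · rw [if_neg hgb, if_neg (fun h' => hgb h'.symm)]]
  rw [← h]
  refine Finset.sum_congr rfl fun j _ => ?_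
  rw [Polynomial.eval_pow, Polynomial.eval_X]

lemma Lam_monomial_lt {d : ℕ} (β γ : Fin d →₀ ℕ) (c : ℝ) (i : Fin d) (h : γ i < β i) :
    Lam β (monomial γ c) = 0 := by
  rw [Lam_monomial]
  rw [Finset.prod_eq_zero (Finset.mem_univ i)
    (by rw [Lam_factor (d := d) (β i) (γ i) (le_of_lt h), if_neg (Nat.ne_of_lt h), mul_zero])]
  rw [mul_zero]

lemma Lam_self {d : ℕ} (β : Fin d →₀ ℕ) (c : ℝ) :
    Lam β (monomial β c) = c * ∏ i, ((β i).factorial : ℝ) := by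
  rw [Lam_monomial]
  congr 1
  refine Finset.prod_congr rfl fun i _ => ?_
  rw [Lam_factor (d := d) (β i) (β i) le_rfl, if_pos rfl, mul_one]

lemma Lam_decomp {d : ℕ} (β : Fin d →₀ ℕ) (q : MvPolynomial (Fin d) ℝ) :
    Lam β q = ∑ γ ∈ q.support, Lam β (monomial γ (coeff γ q)) := by
  calc Lam β q = Lam β (∑ γ ∈ q.support, monomial γ (coeff γ q)) := by
        rw [support_sum_monomial_coeff]
    _ = ∑ γ ∈ q.support, Lam β (monomial γ (coeff γ q)) := by
        simp only [Lam, map_sum, Finset.mul_sum]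
        exact Finset.sum_comm

theorem aux_main (d : ℕ) (hd : 0 < d) (V : Submodule ℝ (MvPolynomial (Fin d) ℝ))
    (htrans : ∀ p ∈ V, ∀ y : Fin d → ℝ,
      bind₁ (fun i => (X i : MvPolynomial (Fin d) ℝ) + C (y i)) p ∈ V)
    (hdil : ∀ p ∈ V, ∀ y : Fin d → ℝ,
      bind₁ (fun i => (C (y i) : MvPolynomial (Fin d) ℝ) * X i) p ∈ V)
    (pn : ℕ → MvPolynomial (Fin d) ℝ) (hpn : ∀ n, pn n ∈ V)
    (p : MvPolynomial (Fin d) ℝ)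
    (hconv : ∀ x : Fin d → ℝ,
      Tendsto (fun n => eval x (pn n)) atTop (nhds (eval x p))) :
    p ∈ V := by
  classical
  have hmonoS : ∀ γ ∈ p.support, monomial γ (1:ℝ) ∈ V := by
    by_contra hcon
    push_neg at hcon
    obtain ⟨γ0, hγ0s, hγ0⟩ := hcon
    set T := p.support.filter (fun γ => monomial γ (1:ℝ) ∉ V) with hT
    have hTne : T.Nonempty := ⟨γ0, Finset.mem_filter.mpr ⟨hγ0s, hγ0⟩⟩
    obtain ⟨β, hβT, hβmax'⟩ := Finset.exists_maximal hTne
    have hβmax : ∀ x ∈ T, ¬ β < x := fun x hx hlt => hlt.not_ge (hβmax' hx hlt.le)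
    obtain ⟨hβsupp, hβnV⟩ := Finset.mem_filter.mp hβT
    have hV0 : ∀ q ∈ V, Lam β q = 0 := by
      intro q hq
      rw [Lam_decomp]
      apply Finset.sum_eq_zero
      intro γ hγ
      by_cases hlt : ∃ i, γ i < β i
      · obtain ⟨i, hi⟩ := hlt
        exact Lam_monomial_lt β γ _ i hi
      · push_neg at hlt
        have hle : β ≤ γ := Finsupp.le_def.mpr hlt
        have hmono : monomial γ (1:ℝ) ∈ V :=
          mono_mem V hdil q hq γ (MvPolynomial.mem_support_iff.mp hγ)
        exact absurd (down V htrans hdil γ hmono β hle) hβnV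
    have hΛpn : ∀ n, Lam β (pn n) = 0 := fun n => hV0 _ (hpn n)
    have hΛp : Lam β p = coeff β p * ∏ i, ((β i).factorial : ℝ) := by
      rw [Lam_decomp]
      rw [Finset.sum_eq_single_of_mem β hβsupp]
      · exact Lam_self β _
      · intro γ hγ hne
        by_cases hlt : ∃ i, γ i < β i
        · obtain ⟨i, hi⟩ := hlt
          exact Lam_monomial_lt β γ _ i hi
        · push_neg at hlt
          have hle : β ≤ γ := Finsupp.le_def.mpr hlt
          by_cases hmem : monomial γ (1:ℝ) ∈ V
          · exact absurd (down V htrans hdil γ hmem β hle) hβnV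
          · have hγT : γ ∈ T := Finset.mem_filter.mpr ⟨hγ, hmem⟩
            have hlt' : β < γ := lt_of_le_of_ne hle (fun h => hne h.symm)
            exact absurd hlt' (hβmax γ hγT)
    have htend : Tendsto (fun n => Lam β (pn n)) atTop (nhds (Lam β p)) := by
      simp only [Lam]
      exact tendsto_finset_sum _ (fun k _ => ((hconv _).const_mul _))
    rw [show (fun n => Lam β (pn n)) = (fun _ => (0:ℝ)) from funext hΛpn] at htend
    have hzero : Lam β p = 0 := tendsto_nhds_unique htend tendsto_const_nhds
    rw [hΛp] at hzero
    have hc : coeff β p ≠ 0 := MvPolynomial.mem_support_iff.mp hβsupp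
    have hfac : (∏ i, ((β i).factorial : ℝ)) ≠ 0 := by
      refine ne_of_gt (Finset.prod_pos fun i _ => ?_)
      exact_mod_cast (β i).factorial_pos
    exact (mul_ne_zero hc hfac) hzero
  have hrw : p = ∑ γ ∈ p.support, coeff γ p • monomial γ (1:ℝ) := by
    conv_lhs => rw [← support_sum_monomial_coeff p]
    refine Finset.sum_congr rfl fun γ _ => ?_
    rw [MvPolynomial.smul_monomial, smul_eq_mul, mul_one]
  rw [hrw]
  exact Submodule.sum_mem V fun γ hγ => V.smul_mem _ (hmonoS γ hγ)

theorem stmt_0 (d : ℕ) (hd : 0 < d) (V : Submodule ℝ (MvPolynomial (Fin d) ℝ))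
    (htrans : ∀ p ∈ V, ∀ y : Fin d → ℝ,
      bind₁ (fun i => (X i : MvPolynomial (Fin d) ℝ) + C (y i)) p ∈ V)
    (hdil : ∀ p ∈ V, ∀ y : Fin d → ℝ,
      bind₁ (fun i => (C (y i) : MvPolynomial (Fin d) ℝ) * X i) p ∈ V)
    (pn : ℕ → MvPolynomial (Fin d) ℝ) (hpn : ∀ n, pn n ∈ V)
    (p : MvPolynomial (Fin d) ℝ)
    (hconv : ∀ x : Fin d → ℝ,
      Tendsto (fun n => eval x (pn n)) atTop (nhds (eval x p))) :
    p ∈ V := aux_main d hd V htrans hdil pn hpn p hconv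
end

section
/- Let p be a polynomial in ℝ[x₁,…,x_d]. Then the linear span of the set of all translates {τ_y p : y ∈ ℝ^d} equals the linear span of the set of all iterated partial derivatives {∂^α p : α ∈ ℕ^d}. In particular, the smallest translation-invariant linear subspace containing p is spanned by the partial derivatives of p. -/
open MvPolynomial

/-- The iterated formal partial derivative `∂^α`, applying `pderiv i` exactly
`α i` times in each variable `i`. -/
noncomputable def iterPDeriv {d : ℕ} (α : Fin d → ℕ) :
    Module.End ℝ (MvPolynomial (Fin d) ℝ) :=
  (List.ofFn fun i : Fin d =>
    ((pderiv i).toLinearMap : Module.End ℝ (MvPolynomial (Fin d) ℝ)) ^ (α i)).prod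

open Finset

section Aux

lemma single_add_single {d : ℕ} (i : Fin d) (k l : ℕ) :
    Finsupp.single i (k + l) = Finsupp.single i k + Finsupp.single i l := by
  rw [Finsupp.single_add]

lemma pderiv_pow_monomial {d : ℕ} (i : Fin d) (k : ℕ) (u : Fin d →₀ ℕ) (c : ℝ) :
    (((pderiv i).toLinearMap : Module.End ℝ (MvPolynomial (Fin d) ℝ)) ^ k) (monomial u c) =
      monomial (u - Finsupp.single i k) (c * (u i).descFactorial k) := by
  induction k with
  | zero => simp
  | succ k ih =>
    rw [pow_succ', Module.End.mul_apply, ih]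
    simp only [LinearMap.coe_mk, Derivation.coeFn_coe, pderiv_monomial]
    have h1 : (u - Finsupp.single i k) i = u i - k := by
      simp [Finsupp.tsub_apply]
    have h2 : u - Finsupp.single i (k + 1) = u - Finsupp.single i k - Finsupp.single i 1 := by
      rw [single_add_single, ← tsub_tsub]
    rw [h1, h2, Nat.descFactorial_succ]
    push_cast
    ring_nf

lemma sum_single_apply_notmem {d : ℕ} (α : Fin d → ℕ) (i : Fin d) :
    ∀ (t : List (Fin d)), i ∉ t → ((t.map fun j => Finsupp.single j (α j)).sum) i = 0 := by
  intro t
  induction t with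
  | nil => simp
  | cons j s ihs =>
    intro hi
    simp only [List.mem_cons, not_or] at hi
    simp only [List.map_cons, List.sum_cons, Finsupp.add_apply]
    rw [Finsupp.single_apply, if_neg (fun h => hi.1 h.symm), ihs hi.2]

lemma list_pderiv_monomial {d : ℕ} (α : Fin d → ℕ) :
    ∀ (l : List (Fin d)), l.Nodup → ∀ (u : Fin d →₀ ℕ) (c : ℝ),
      ((l.map fun i => ((pderiv i).toLinearMap : Module.End ℝ (MvPolynomial (Fin d) ℝ)) ^ (α i)).prod)
          (monomial u c) =
        monomial (u - (l.map fun i => Finsupp.single i (α i)).sum)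
          (c * ((l.map fun i => ((u i).descFactorial (α i) : ℝ)).prod)) := by
  intro l
  induction l with
  | nil => intro _ u c; simp
  | cons i t ih =>
    intro hnd u c
    have hi : i ∉ t := (List.nodup_cons.mp hnd).1
    have ht : t.Nodup := (List.nodup_cons.mp hnd).2
    simp only [List.map_cons, List.prod_cons, List.sum_cons, Module.End.mul_apply, ih ht]
    rw [pderiv_pow_monomial]
    have h1 : (u - (t.map fun j => Finsupp.single j (α j)).sum) i = u i := by
      simp [Finsupp.tsub_apply, sum_single_apply_notmem α i t hi]
    rw [h1, ← tsub_tsub]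
    rw [tsub_tsub, tsub_tsub, add_comm]
    ring_nf

/-- `α` as a finitely supported function. -/
noncomputable def toF {d : ℕ} (α : Fin d → ℕ) : Fin d →₀ ℕ := ∑ i, Finsupp.single i (α i)

lemma toF_apply {d : ℕ} (α : Fin d → ℕ) (j : Fin d) : toF α j = α j := by
  classical
  simp [toF, Finsupp.finset_sum_apply, Finsupp.single_apply]

lemma toF_injective {d : ℕ} : Function.Injective (toF (d := d)) := by
  intro α β h
  funext j
  rw [← toF_apply α j, ← toF_apply β j, h]

lemma iterPDeriv_monomial {d : ℕ} (α : Fin d → ℕ) (u : Fin d →₀ ℕ) (c : ℝ) :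
    iterPDeriv α (monomial u c) =
      monomial (u - toF α) (c * ∏ i, ((u i).descFactorial (α i) : ℝ)) := by
  have h := list_pderiv_monomial α (List.finRange d) (List.nodup_finRange d) u c
  rw [← List.ofFn_eq_map, ← List.ofFn_eq_map, ← List.ofFn_eq_map, List.sum_ofFn,
    List.prod_ofFn] at h
  rw [iterPDeriv, h, toF]

lemma binom_ext {R : Type*} [CommSemiring R] (a b : R) (n N : ℕ) (h : n ≤ N) :
    (a + b) ^ n = ∑ k ∈ range (N + 1), a ^ (n - k) * b ^ k * (n.choose k : R) := by
  rw [add_comm a b, add_pow]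
  refine Eq.trans (Finset.sum_congr rfl fun k _ => by ring)
    (Finset.sum_subset (Finset.range_subset_range.mpr (Nat.succ_le_succ h)) ?_)
  intro k _ hk
  rw [Finset.mem_range, not_lt] at hk
  rw [Nat.choose_eq_zero_of_lt (by omega)]
  simp

lemma coef_id {d : ℕ} (y : Fin d → ℝ) (α : Fin d → ℕ) (u : Fin d →₀ ℕ) (c : ℝ) :
    c * (∏ i, y i ^ α i) * (∏ i, ((u i).choose (α i) : ℝ)) =
      (∏ i, y i ^ α i / (α i).factorial) * (c * ∏ i, ((u i).descFactorial (α i) : ℝ)) := by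
  rw [mul_comm (∏ i, y i ^ α i / (α i).factorial), mul_assoc, mul_assoc]
  congr 1
  rw [← Finset.prod_mul_distrib, ← Finset.prod_mul_distrib]
  apply Finset.prod_congr rfl
  intro i _
  rw [Nat.descFactorial_eq_factorial_mul_choose]
  push_cast
  have : ((α i).factorial : ℝ) ≠ 0 := Nat.cast_ne_zero.mpr (Nat.factorial_ne_zero _)
  field_simp

lemma taylor_monomial {d : ℕ} (N : ℕ) (y : Fin d → ℝ) (u : Fin d →₀ ℕ) (c : ℝ)
    (hu : ∀ i, u i ≤ N) :
    bind₁ (fun i => (X i : MvPolynomial (Fin d) ℝ) + C (y i)) (monomial u c) =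
      ∑ α ∈ Fintype.piFinset (fun _ : Fin d => range (N + 1)),
        (∏ i, y i ^ α i / (α i).factorial) • iterPDeriv α (monomial u c) := by
  have step1 : bind₁ (fun i => (X i : MvPolynomial (Fin d) ℝ) + C (y i)) (monomial u c) =
      C c * ∏ i, ((X i : MvPolynomial (Fin d) ℝ) + C (y i)) ^ (u i) := by
    rw [bind₁_monomial]
    congr 1
    apply Finset.prod_subset (Finset.subset_univ _)
    intro i _ hi
    rw [Finsupp.notMem_support_iff.mp hi, pow_zero]
  rw [step1]
  have step2 : ∀ i : Fin d, ((X i : MvPolynomial (Fin d) ℝ) + C (y i)) ^ (u i) =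
      ∑ k ∈ range (N + 1),
        (X i : MvPolynomial (Fin d) ℝ) ^ (u i - k) * (C (y i)) ^ k
          * ((u i).choose k : MvPolynomial (Fin d) ℝ) :=
    fun i => binom_ext _ _ _ _ (hu i)
  rw [Finset.prod_congr rfl (fun i _ => step2 i), Finset.prod_univ_sum, Finset.mul_sum]
  apply Finset.sum_congr rfl
  intro α _
  rw [iterPDeriv_monomial, smul_monomial, smul_eq_mul]
  have hmon : (monomial (u - toF α)) ((∏ i, y i ^ α i / (α i).factorial)
        * (c * ∏ i, ((u i).descFactorial (α i) : ℝ)))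
      = C ((∏ i, y i ^ α i / (α i).factorial) * (c * ∏ i, ((u i).descFactorial (α i) : ℝ)))
        * ∏ i, (X i : MvPolynomial (Fin d) ℝ) ^ (u i - α i) := by
    rw [monomial_eq]
    congr 1
    rw [Finsupp.prod_fintype _ _ (fun i => pow_zero _)]
    apply Finset.prod_congr rfl
    intro i _
    rw [Finsupp.tsub_apply, toF_apply]
  rw [hmon, ← coef_id]
  have expand : ∀ i : Fin d,
      (X i : MvPolynomial (Fin d) ℝ) ^ (u i - α i) * (C (y i)) ^ (α i)
          * ((u i).choose (α i) : MvPolynomial (Fin d) ℝ)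
      = (X i : MvPolynomial (Fin d) ℝ) ^ (u i - α i) * C (y i ^ α i)
          * C (((u i).choose (α i) : ℝ)) := by
    intro i
    rw [← C_pow]
    norm_cast
  rw [Finset.prod_congr rfl (fun i _ => expand i), Finset.prod_mul_distrib,
    Finset.prod_mul_distrib, ← map_prod, ← map_prod, map_mul, map_mul]
  ring

lemma apply_le_sum {d : ℕ} (u : Fin d →₀ ℕ) (i : Fin d) : u i ≤ u.sum fun _ e => e := by
  by_cases h : i ∈ u.support
  · exact Finset.single_le_sum (fun _ _ => Nat.zero_le _) h
  · rw [Finsupp.notMem_support_iff.mp h]; exact Nat.zero_le _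

lemma my_taylor {d : ℕ} (N : ℕ) (p : MvPolynomial (Fin d) ℝ) (hN : p.totalDegree ≤ N)
    (y : Fin d → ℝ) :
    bind₁ (fun i => (X i : MvPolynomial (Fin d) ℝ) + C (y i)) p =
      ∑ α ∈ Fintype.piFinset (fun _ : Fin d => range (N + 1)),
        (∏ i, y i ^ α i / (α i).factorial) • iterPDeriv α p := by
  conv_lhs => rw [p.as_sum]
  rw [map_sum]
  have key : ∀ u ∈ p.support,
      bind₁ (fun i => (X i : MvPolynomial (Fin d) ℝ) + C (y i)) (monomial u (coeff u p)) =
        ∑ α ∈ Fintype.piFinset (fun _ : Fin d => range (N + 1)),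
          (∏ i, y i ^ α i / (α i).factorial) • iterPDeriv α (monomial u (coeff u p)) := by
    intro u hu
    exact taylor_monomial N y u _
      (fun i => le_trans (apply_le_sum u i) (le_trans (le_totalDegree hu) hN))
  rw [Finset.sum_congr rfl key, Finset.sum_comm]
  apply Finset.sum_congr rfl
  intro α _
  rw [← Finset.smul_sum, ← map_sum, ← p.as_sum]

lemma coeff_mem_span {V : Type*} [AddCommGroup V] [Module ℝ V] {d : ℕ}
    (A : Finset (Fin d → ℕ)) (v : (Fin d → ℕ) → V)
    (f : (Fin d → ℝ) → V)
    (hf : ∀ y, f y = ∑ α ∈ A, (∏ i, y i ^ α i) • v α) :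
    ∀ α ∈ A, v α ∈ Submodule.span ℝ (Set.range f) := by
  intro α₀ hα₀
  set W := Submodule.span ℝ (Set.range f) with hW
  rw [← Submodule.Quotient.mk_eq_zero W]
  have h0 : ∀ y : Fin d → ℝ,
      ∑ α ∈ A, (∏ i, y i ^ α i) • Submodule.Quotient.mk (p := W) (v α) = 0 := by
    intro y
    have hfy : (Submodule.Quotient.mk (p := W) (f y)) = 0 := by
      rw [Submodule.Quotient.mk_eq_zero]
      exact Submodule.subset_span (Set.mem_range_self y)
    rw [← hfy, hf y]
    simp only [← Submodule.mkQ_apply, map_sum, map_smul]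
  rw [← Module.forall_dual_apply_eq_zero_iff ℝ]
  intro φ
  set P : MvPolynomial (Fin d) ℝ :=
    ∑ α ∈ A, monomial (toF α) (φ (Submodule.Quotient.mk (p := W) (v α))) with hP
  have hev : ∀ x : Fin d → ℝ, eval x P = 0 := by
    intro x
    rw [hP, map_sum]
    have : ∀ α ∈ A, eval x (monomial (toF α) (φ (Submodule.Quotient.mk (p := W) (v α))))
        = (∏ i, x i ^ α i) * φ (Submodule.Quotient.mk (p := W) (v α)) := by
      intro α _
      rw [eval_monomial, Finsupp.prod_fintype _ _ (fun i => pow_zero _)]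
      rw [mul_comm]
      congr 1
      exact Finset.prod_congr rfl (fun i _ => by rw [toF_apply])
    rw [Finset.sum_congr rfl this]
    have := h0 x
    calc ∑ α ∈ A, (∏ i, x i ^ α i) • φ (Submodule.Quotient.mk (p := W) (v α))
        = φ (∑ α ∈ A, (∏ i, x i ^ α i) • Submodule.Quotient.mk (p := W) (v α)) := by
          rw [map_sum]; exact Finset.sum_congr rfl (fun α _ => by rw [map_smul])
      _ = 0 := by rw [this, map_zero]
  have hP0 : P = 0 := by
    apply MvPolynomial.funext
    intro x
    rw [hev x, map_zero]
  have hco : coeff (toF α₀) P = φ (Submodule.Quotient.mk (p := W) (v α₀)) := by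
    rw [hP, MvPolynomial.coeff_sum]
    rw [Finset.sum_eq_single α₀ (fun β _ hβ => by
      rw [coeff_monomial, if_neg (fun h => hβ (toF_injective h))])
      (fun h => absurd hα₀ h)]
    rw [coeff_monomial, if_pos rfl]
  rw [hP0] at hco
  simpa using hco.symm

lemma desc_mul_desc (n b a : ℕ) :
    n.descFactorial b * (n - b).descFactorial a = n.descFactorial (a + b) := by
  induction a with
  | zero => simp
  | succ a ih =>
    rw [Nat.descFactorial_succ, show a + 1 + b = (a + b) + 1 from by omega,
      Nat.descFactorial_succ, ← ih]
    rcases Nat.lt_or_ge n b with h | h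
    · rw [Nat.descFactorial_eq_zero_iff_lt.mpr h]; ring
    · rw [show n - b - a = n - (a + b) from by omega]; ring

lemma pderiv_bind₁ {d : ℕ} (i : Fin d) (y : Fin d → ℝ) (q : MvPolynomial (Fin d) ℝ) :
    pderiv i (bind₁ (fun j => (X j : MvPolynomial (Fin d) ℝ) + C (y j)) q) =
      bind₁ (fun j => (X j : MvPolynomial (Fin d) ℝ) + C (y j)) (pderiv i q) := by
  induction q using MvPolynomial.induction_on with
  | C a => simp
  | add p q hp hq => simp [map_add, hp, hq]
  | mul_X p j hp =>
    simp only [map_mul, bind₁_X_right, pderiv_mul, hp, pderiv_X]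
    rcases eq_or_ne j i with rfl | h
    · simp [Pi.single_eq_same]
    · simp [Pi.single_eq_of_ne h]

lemma toF_add {d : ℕ} (α β : Fin d → ℕ) : toF (α + β) = toF β + toF α := by
  ext j
  simp [toF_apply, Finsupp.add_apply]
  exact add_comm _ _

lemma iterPDeriv_comp {d : ℕ} (α β : Fin d → ℕ) (p : MvPolynomial (Fin d) ℝ) :
    iterPDeriv α (iterPDeriv β p) = iterPDeriv (α + β) p := by
  conv_lhs => rw [p.as_sum]
  conv_rhs => rw [p.as_sum]
  rw [map_sum, map_sum, map_sum]
  apply Finset.sum_congr rfl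
  intro u _
  rw [iterPDeriv_monomial, iterPDeriv_monomial, iterPDeriv_monomial, toF_add, ← tsub_tsub]
  congr 1
  rw [mul_assoc, ← Finset.prod_mul_distrib]
  congr 1
  apply Finset.prod_congr rfl
  intro i _
  rw [Finsupp.tsub_apply, toF_apply,
    show (α + β) i = α i + β i from rfl, ← desc_mul_desc (u i) (β i) (α i)]
  push_cast
  ring

lemma iterPDeriv_zero_apply {d : ℕ} (p : MvPolynomial (Fin d) ℝ) :
    iterPDeriv (fun _ => 0) p = p := by
  have key : ∀ (u : Fin d →₀ ℕ) (c : ℝ), iterPDeriv (fun _ : Fin d => 0) (monomial u c)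
      = monomial u c := by
    intro u c
    rw [iterPDeriv_monomial]
    have h : toF (fun _ : Fin d => 0) = 0 := by ext j; rw [toF_apply]; rfl
    simp [h]
  conv_lhs => rw [p.as_sum]
  rw [map_sum, Finset.sum_congr rfl (fun u _ => key u _), ← p.as_sum]

lemma iterPDeriv_eq_zero {d : ℕ} (α : Fin d → ℕ) (p : MvPolynomial (Fin d) ℝ)
    (i : Fin d) (h : p.totalDegree < α i) : iterPDeriv α p = 0 := by
  rw [p.as_sum, map_sum]
  apply Finset.sum_eq_zero
  intro u hu
  rw [iterPDeriv_monomial]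
  have h0 : (u i).descFactorial (α i) = 0 :=
    Nat.descFactorial_eq_zero_iff_lt.mpr
      (lt_of_le_of_lt (le_trans (apply_le_sum u i) (le_totalDegree hu)) h)
  rw [Finset.prod_eq_zero (Finset.mem_univ i) (by rw [h0]; exact Nat.cast_zero), mul_zero,
    map_zero]

lemma bind₁_comm_iterPDeriv {d : ℕ} (y : Fin d → ℝ) (α : Fin d → ℕ)
    (p : MvPolynomial (Fin d) ℝ) :
    bind₁ (fun j => (X j : MvPolynomial (Fin d) ℝ) + C (y j)) (iterPDeriv α p) =
      iterPDeriv α (bind₁ (fun j => (X j : MvPolynomial (Fin d) ℝ) + C (y j)) p) := by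
  set T : Module.End ℝ (MvPolynomial (Fin d) ℝ) :=
    (bind₁ (fun j => (X j : MvPolynomial (Fin d) ℝ) + C (y j))).toLinearMap with hT
  have hc : Commute T (iterPDeriv α) := by
    apply Commute.list_prod_right
    intro x hx
    rw [List.mem_ofFn] at hx
    obtain ⟨i, rfl⟩ := hx
    apply Commute.pow_right
    apply LinearMap.ext
    intro q
    exact (pderiv_bind₁ i y q).symm
  have := LinearMap.congr_fun hc p
  exact this


end Aux

theorem stmt_1 (d : ℕ) (p : MvPolynomial (Fin d) ℝ) :
    Submodule.span ℝ {q : MvPolynomial (Fin d) ℝ |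
        ∃ y : Fin d → ℝ, q = bind₁ (fun i => (X i : MvPolynomial (Fin d) ℝ) + C (y i)) p} =
      Submodule.span ℝ {q : MvPolynomial (Fin d) ℝ |
        ∃ α : Fin d → ℕ, q = iterPDeriv α p} ∧
    sInf {W : Submodule ℝ (MvPolynomial (Fin d) ℝ) | p ∈ W ∧
        ∀ q ∈ W, ∀ y : Fin d → ℝ,
          bind₁ (fun i => (X i : MvPolynomial (Fin d) ℝ) + C (y i)) q ∈ W} =
      Submodule.span ℝ {q : MvPolynomial (Fin d) ℝ |
        ∃ α : Fin d → ℕ, q = iterPDeriv α p} := by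
  set N := p.totalDegree with hN
  set A : Finset (Fin d → ℕ) := Fintype.piFinset (fun _ : Fin d => range (N + 1)) with hA
  set S₁ : Set (MvPolynomial (Fin d) ℝ) :=
    {q | ∃ y : Fin d → ℝ, q = bind₁ (fun i => (X i : MvPolynomial (Fin d) ℝ) + C (y i)) p}
    with hS₁
  set S₂ : Set (MvPolynomial (Fin d) ℝ) := {q | ∃ α : Fin d → ℕ, q = iterPDeriv α p} with hS₂
  have le₁ : Submodule.span ℝ S₁ ≤ Submodule.span ℝ S₂ := by
    rw [Submodule.span_le]
    rintro q ⟨y, rfl⟩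
    rw [my_taylor N p le_rfl y]
    apply Submodule.sum_mem
    intro α _
    exact Submodule.smul_mem _ _ (Submodule.subset_span ⟨α, rfl⟩)
  have le₂ : Submodule.span ℝ S₂ ≤ Submodule.span ℝ S₁ := by
    rw [Submodule.span_le]
    rintro q ⟨α, rfl⟩
    set f : (Fin d → ℝ) → MvPolynomial (Fin d) ℝ :=
      fun y => bind₁ (fun i => (X i : MvPolynomial (Fin d) ℝ) + C (y i)) p with hf
    set v : (Fin d → ℕ) → MvPolynomial (Fin d) ℝ :=
      fun β => (∏ i, ((β i).factorial : ℝ))⁻¹ • iterPDeriv β p with hv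
    have hrange : S₁ = Set.range f := by
      ext q; constructor
      · rintro ⟨y, rfl⟩; exact ⟨y, rfl⟩
      · rintro ⟨y, rfl⟩; exact ⟨y, rfl⟩
    have hfac_ne : ∀ β : Fin d → ℕ, (∏ i, ((β i).factorial : ℝ)) ≠ 0 := by
      intro β
      apply Finset.prod_ne_zero_iff.mpr
      intro i _
      exact Nat.cast_ne_zero.mpr (Nat.factorial_ne_zero _)
    have hfe : ∀ y, f y = ∑ β ∈ A, (∏ i, y i ^ β i) • v β := by
      intro y
      show bind₁ (fun i => (X i : MvPolynomial (Fin d) ℝ) + C (y i)) p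
        = ∑ β ∈ A, (∏ i, y i ^ β i) • v β
      rw [my_taylor N p le_rfl y]
      apply Finset.sum_congr rfl
      intro β _
      rw [hv, smul_smul]
      congr 1
      rw [Finset.prod_div_distrib, div_eq_mul_inv]
    by_cases hmem : α ∈ A
    · have hvmem := coeff_mem_span A v f hfe α hmem
      rw [← hrange] at hvmem
      have : iterPDeriv α p = (∏ i, ((α i).factorial : ℝ)) • v α := by
        rw [hv, smul_smul, mul_inv_cancel₀ (hfac_ne α), one_smul]
      rw [this]
      exact Submodule.smul_mem _ _ hvmem
    · rw [hA, Fintype.mem_piFinset] at hmem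
      push_neg at hmem
      obtain ⟨i, hi⟩ := hmem
      rw [Finset.mem_range, not_lt] at hi
      rw [iterPDeriv_eq_zero α p i (by omega)]
      exact Submodule.zero_mem _
  have hspan : Submodule.span ℝ S₁ = Submodule.span ℝ S₂ := le_antisymm le₁ le₂
  refine ⟨hspan, ?_⟩
  apply le_antisymm
  · apply sInf_le
    constructor
    · exact Submodule.subset_span ⟨fun _ => 0, (iterPDeriv_zero_apply p).symm⟩
    · intro q hq y
      induction hq using Submodule.span_induction with
      | mem x hx =>
        obtain ⟨α, rfl⟩ := hx
        rw [bind₁_comm_iterPDeriv y α p, my_taylor N p le_rfl y, map_sum]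
        apply Submodule.sum_mem
        intro β _
        rw [map_smul, iterPDeriv_comp]
        exact Submodule.smul_mem _ _ (Submodule.subset_span ⟨α + β, rfl⟩)
      | zero => rw [map_zero]; exact Submodule.zero_mem _
      | add a b _ _ ha hb => rw [map_add]; exact Submodule.add_mem _ ha hb
      | smul r a _ ha => rw [map_smul]; exact Submodule.smul_mem _ _ ha
  · apply le_sInf
    rintro W ⟨hpW, hinv⟩
    rw [← hspan, Submodule.span_le]
    rintro q ⟨y, rfl⟩
    exact hinv p hpW y
end

section
/- Let p be a polynomial in ℝ[x₁,…,x_d]. Then the linear span of the set of all dilates {σ_λ p : λ ∈ ℝ^d} equals the linear span of the set of monomials {x^α : α ∈ ℕ^d, the coefficient of x^α in p is nonzero}. In particular, the smallest dilation-invariant linear subspace containing p is spanned by the monomials occurring in p with nonzero coefficient. -/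
open MvPolynomial

lemma dilate_monomial (d : ℕ) (lam : Fin d → ℝ) (α : Fin d →₀ ℕ) (c : ℝ) :
    bind₁ (fun i => (C (lam i) : MvPolynomial (Fin d) ℝ) * X i) (monomial α c)
      = (c * α.prod fun i e => lam i ^ e) • monomial α (1 : ℝ) := by
  rw [bind₁, aeval_monomial, smul_eq_C_mul, monomial_eq, Finsupp.prod, Finsupp.prod,
    Finsupp.prod]
  simp only [mul_pow, ← C_pow, Finset.prod_mul_distrib, ← map_prod, algebraMap_eq,
    ← C_mul, map_one]
  rw [C_mul]; ring

lemma dilate_eq_sum (d : ℕ) (p : MvPolynomial (Fin d) ℝ) (lam : Fin d → ℝ) :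
    bind₁ (fun i => (C (lam i) : MvPolynomial (Fin d) ℝ) * X i) p
      = ∑ β ∈ p.support, (coeff β p * β.prod fun i e => lam i ^ e) • monomial β (1 : ℝ) := by
  conv_lhs => rw [as_sum p]
  rw [map_sum]
  exact Finset.sum_congr rfl fun β _ => dilate_monomial d lam β (coeff β p)

lemma mono_mem_span_dilates (d : ℕ) (p : MvPolynomial (Fin d) ℝ) (α : Fin d →₀ ℕ)
    (hα : coeff α p ≠ 0) :
    monomial α (1 : ℝ) ∈ Submodule.span ℝ {q : MvPolynomial (Fin d) ℝ |
        ∃ lam : Fin d → ℝ,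
          q = bind₁ (fun i => (C (lam i) : MvPolynomial (Fin d) ℝ) * X i) p} := by
  set D := Submodule.span ℝ {q : MvPolynomial (Fin d) ℝ |
        ∃ lam : Fin d → ℝ,
          q = bind₁ (fun i => (C (lam i) : MvPolynomial (Fin d) ℝ) * X i) p} with hD
  rw [← Submodule.Quotient.mk_eq_zero D]
  haveI : Module.Free ℝ (MvPolynomial (Fin d) ℝ ⧸ D) := Module.Free.of_divisionRing _ _
  haveI : Module.Projective ℝ (MvPolynomial (Fin d) ℝ ⧸ D) := Module.Projective.of_free
  rw [← Module.forall_dual_apply_eq_zero_iff ℝ]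
  intro φ
  set ψ : MvPolynomial (Fin d) ℝ →ₗ[ℝ] ℝ := φ.comp D.mkQ with hψ
  have hdil : ∀ lam : Fin d → ℝ,
      ψ (bind₁ (fun i => (C (lam i) : MvPolynomial (Fin d) ℝ) * X i) p) = 0 := by
    intro lam
    have : bind₁ (fun i => (C (lam i) : MvPolynomial (Fin d) ℝ) * X i) p ∈ D :=
      Submodule.subset_span ⟨lam, rfl⟩
    simp [hψ, Submodule.mkQ_apply, (Submodule.Quotient.mk_eq_zero D).2 this]
  -- the auxiliary polynomial
  set P : MvPolynomial (Fin d) ℝ :=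
    ∑ β ∈ p.support, monomial β (coeff β p * ψ (monomial β 1)) with hP
  have hPzero : P = 0 := by
    apply MvPolynomial.funext
    intro lam
    have := hdil lam
    rw [dilate_eq_sum, map_sum] at this
    rw [hP, map_sum, map_zero]
    rw [← this]
    refine Finset.sum_congr rfl fun β _ => ?_
    rw [eval_monomial, map_smul, smul_eq_mul]
    ring
  have hcoeff : coeff α P = coeff α p * ψ (monomial α 1) := by
    rw [hP, coeff_sum]
    rw [Finset.sum_eq_single α]
    · rw [coeff_monomial, if_pos rfl]
    · intro β _ hβ
      rw [coeff_monomial, if_neg hβ]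
    · intro h
      exact absurd (mem_support_iff.2 hα) h
  rw [hPzero, coeff_zero] at hcoeff
  have := (mul_eq_zero.1 hcoeff.symm).resolve_left hα
  simpa [hψ] using this

theorem stmt_2 (d : ℕ) (p : MvPolynomial (Fin d) ℝ) :
    Submodule.span ℝ {q : MvPolynomial (Fin d) ℝ |
        ∃ lam : Fin d → ℝ,
          q = bind₁ (fun i => (C (lam i) : MvPolynomial (Fin d) ℝ) * X i) p} =
      Submodule.span ℝ {q : MvPolynomial (Fin d) ℝ |
        ∃ α : Fin d →₀ ℕ, coeff α p ≠ 0 ∧ q = monomial α (1 : ℝ)} ∧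
    sInf {W : Submodule ℝ (MvPolynomial (Fin d) ℝ) | p ∈ W ∧
        ∀ q ∈ W, ∀ lam : Fin d → ℝ,
          bind₁ (fun i => (C (lam i) : MvPolynomial (Fin d) ℝ) * X i) q ∈ W} =
      Submodule.span ℝ {q : MvPolynomial (Fin d) ℝ |
        ∃ α : Fin d →₀ ℕ, coeff α p ≠ 0 ∧ q = monomial α (1 : ℝ)} := by
  set M := Submodule.span ℝ {q : MvPolynomial (Fin d) ℝ |
        ∃ α : Fin d →₀ ℕ, coeff α p ≠ 0 ∧ q = monomial α (1 : ℝ)} with hM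
  have hDM : Submodule.span ℝ {q : MvPolynomial (Fin d) ℝ |
        ∃ lam : Fin d → ℝ,
          q = bind₁ (fun i => (C (lam i) : MvPolynomial (Fin d) ℝ) * X i) p} = M := by
    apply le_antisymm
    · rw [Submodule.span_le]
      rintro q ⟨lam, rfl⟩
      rw [dilate_eq_sum]
      exact Submodule.sum_mem _ fun β hβ =>
        Submodule.smul_mem _ _ (Submodule.subset_span ⟨β, mem_support_iff.1 hβ, rfl⟩)
    · rw [Submodule.span_le]
      rintro q ⟨α, hα, rfl⟩
      exact mono_mem_span_dilates d p α hα
  refine ⟨hDM, le_antisymm ?_ ?_⟩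
  · apply sInf_le
    constructor
    · -- p ∈ M
      suffices h : ∑ β ∈ p.support, monomial β (coeff β p) ∈ M by rwa [← as_sum p] at h
      refine Submodule.sum_mem _ fun β hβ => ?_
      have : (monomial β (coeff β p) : MvPolynomial (Fin d) ℝ)
          = coeff β p • monomial β 1 := by
        rw [smul_monomial, smul_eq_mul, mul_one]
      rw [this]
      exact Submodule.smul_mem _ _ (Submodule.subset_span ⟨β, mem_support_iff.1 hβ, rfl⟩)
    · intro q hq lam
      have hmap : Submodule.map
          (bind₁ (fun i => (C (lam i) : MvPolynomial (Fin d) ℝ) * X i)).toLinearMap M ≤ M := by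
        rw [hM, Submodule.map_span, Submodule.span_le]
        rintro r ⟨s, ⟨α, hα, rfl⟩, rfl⟩
        simp only [AlgHom.toLinearMap_apply]
        rw [dilate_monomial]
        exact Submodule.smul_mem _ _ (Submodule.subset_span ⟨α, hα, rfl⟩)
      exact hmap ⟨q, hq, rfl⟩
  · rw [← hDM]
    apply le_sInf
    rintro W ⟨hpW, hinv⟩
    rw [Submodule.span_le]
    rintro q ⟨lam, rfl⟩
    exact hinv p hpW lam
end

section
/- An ℝ-linear subspace V of the polynomial ring ℝ[x₁,…,x_d] is dilation invariant if and only if there exists a set S ⊆ ℕ^d of multi-indices such that V is the linear span of the monomials {x^α : α ∈ S}, i.e., V admits a basis formed by monomials. -/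
open MvPolynomial

lemma dilate_coeff (d : ℕ) (lam : Fin d → ℝ) (p : MvPolynomial (Fin d) ℝ) (γ : Fin d →₀ ℕ) :
    coeff γ (bind₁ (fun i => (C (lam i) : MvPolynomial (Fin d) ℝ) * X i) p)
      = (∏ i, lam i ^ γ i) * coeff γ p := by
  induction p using MvPolynomial.induction_on' with
  | monomial α r =>
    rw [bind₁_monomial]
    have h : (C r : MvPolynomial (Fin d) ℝ) * ∏ i ∈ α.support, (C (lam i) * X i) ^ α i
        = monomial α (r * ∏ i ∈ α.support, lam i ^ α i) := by
      simp only [mul_pow, ← C_pow, Finset.prod_mul_distrib, ← map_prod]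
      rw [monomial_eq, map_mul, Finsupp.prod]
      ring
    rw [h, coeff_monomial, coeff_monomial]
    split
    · next heq =>
      subst heq
      rw [Finset.prod_subset (Finset.subset_univ _)]
      · ring
      · intro i _ hi
        simp [Finsupp.notMem_support_iff.mp hi]
    · ring
  | add p q hp hq =>
    rw [map_add, coeff_add, coeff_add, hp, hq]
    ring

lemma key (d : ℕ) (V : Submodule ℝ (MvPolynomial (Fin d) ℝ))
    (hV : ∀ p ∈ V, ∀ lam : Fin d → ℝ,
        bind₁ (fun i => (C (lam i) : MvPolynomial (Fin d) ℝ) * X i) p ∈ V) :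
    ∀ n (p : MvPolynomial (Fin d) ℝ), p.support.card ≤ n → p ∈ V →
      ∀ β ∈ p.support, monomial β (coeff β p) ∈ V := by
  intro n
  induction n with
  | zero =>
    intro p hc _ β hβ
    rw [Nat.le_zero, Finset.card_eq_zero] at hc
    simp [hc] at hβ
  | succ n ih =>
    intro p hc hp β hβ
    by_cases hsub : p.support ⊆ {β}
    · have hsupp : p.support = {β} := Finset.Subset.antisymm hsub (Finset.singleton_subset_iff.mpr hβ)
      have : p = monomial β (coeff β p) := by
        conv_lhs => rw [p.as_sum, hsupp, Finset.sum_singleton]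
      rwa [← this]
    · obtain ⟨α, hα, hαβ⟩ : ∃ α ∈ p.support, α ≠ β := by
        by_contra h
        push_neg at h
        exact hsub fun x hx => Finset.mem_singleton.mpr (h x hx)
      obtain ⟨i, hi⟩ : ∃ i, α i ≠ β i := by
        by_contra h
        push_neg at h
        exact hαβ (Finsupp.ext h)
      set lam : Fin d → ℝ := fun j => if j = i then 2 else 1 with hlam
      have hprod : ∀ γ : Fin d →₀ ℕ, (∏ j, lam j ^ γ j) = 2 ^ γ i := by
        intro γ
        rw [Finset.prod_eq_single i]
        · simp [hlam]
        · intro j _ hj; simp [hlam, hj]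
        · simp
      have hinj : Function.Injective (fun m : ℕ => (2:ℝ) ^ m) :=
        (pow_right_strictMono₀ one_lt_two).injective
      set q := bind₁ (fun j => (C (lam j) : MvPolynomial (Fin d) ℝ) * X j) p
          - ((2:ℝ) ^ α i) • p with hq
      have hqV : q ∈ V := Submodule.sub_mem V (hV p hp lam) (Submodule.smul_mem V _ hp)
      have hqc : ∀ γ, coeff γ q = ((2:ℝ) ^ γ i - 2 ^ α i) * coeff γ p := by
        intro γ
        rw [hq, coeff_sub, coeff_smul, dilate_coeff, hprod, smul_eq_mul]
        ring
      have hqs : q.support ⊆ p.support \ {α} := by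
        intro γ hγ
        rw [mem_support_iff, hqc] at hγ
        rw [Finset.mem_sdiff, Finset.mem_singleton, mem_support_iff]
        constructor
        · intro h; apply hγ; rw [h, mul_zero]
        · rintro rfl; apply hγ; ring
      have hβq : β ∈ q.support := by
        rw [mem_support_iff, hqc]
        refine mul_ne_zero ?_ (mem_support_iff.mp hβ)
        exact sub_ne_zero.mpr (fun h => hi.symm (hinj h))
      have hcard : q.support.card ≤ n := by
        have h1 : q.support.card ≤ (p.support \ {α}).card := Finset.card_le_card hqs
        have h2 : (p.support \ {α}).card < p.support.card :=
          Finset.card_lt_card (Finset.sdiff_ssubset (Finset.singleton_subset_iff.mpr hα) (by simp))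
        omega
      have hmem := ih q hcard hqV β hβq
      have hne : ((2:ℝ) ^ β i - 2 ^ α i) ≠ 0 := sub_ne_zero.mpr (fun h => hi.symm (hinj h))
      have : monomial β (coeff β p) = ((2:ℝ) ^ β i - 2 ^ α i)⁻¹ • monomial β (coeff β q) := by
        rw [hqc, smul_monomial, smul_eq_mul, ← mul_assoc, inv_mul_cancel₀ hne, one_mul]
      rw [this]
      exact Submodule.smul_mem V _ hmem

lemma dilate_monomial_one (d : ℕ) (lam : Fin d → ℝ) (α : Fin d →₀ ℕ) :
    bind₁ (fun i => (C (lam i) : MvPolynomial (Fin d) ℝ) * X i) (monomial α 1)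
      = (∏ i, lam i ^ α i) • monomial α (1 : ℝ) := by
  apply MvPolynomial.ext
  intro γ
  rw [dilate_coeff, coeff_smul, coeff_monomial, smul_eq_mul]
  split
  · next h => rw [h]
  · ring

theorem stmt_3 (d : ℕ) (V : Submodule ℝ (MvPolynomial (Fin d) ℝ)) :
    (∀ p ∈ V, ∀ lam : Fin d → ℝ,
        bind₁ (fun i => (C (lam i) : MvPolynomial (Fin d) ℝ) * X i) p ∈ V) ↔
      ∃ S : Set (Fin d →₀ ℕ),
        V = Submodule.span ℝ ((fun α => monomial α (1 : ℝ)) '' S) := by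
  constructor
  · intro hV
    refine ⟨{α | monomial α (1:ℝ) ∈ V}, le_antisymm ?_ ?_⟩
    · intro p hp
      rw [p.as_sum]
      apply Submodule.sum_mem
      intro β hβ
      have h1 : monomial β (coeff β p) ∈ V := key d V hV p.support.card p le_rfl hp β hβ
      have hne : coeff β p ≠ 0 := mem_support_iff.mp hβ
      have h2 : monomial β (1:ℝ) ∈ V := by
        have : monomial β (1:ℝ) = (coeff β p)⁻¹ • monomial β (coeff β p) := by
          rw [smul_monomial, smul_eq_mul, inv_mul_cancel₀ hne]
        rw [this]; exact Submodule.smul_mem V _ h1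
      have h3 : monomial β (coeff β p) = coeff β p • monomial β (1:ℝ) := by
        rw [smul_monomial, smul_eq_mul, mul_one]
      rw [h3]
      exact Submodule.smul_mem _ _ (Submodule.subset_span ⟨β, h2, rfl⟩)
    · rw [Submodule.span_le]
      rintro _ ⟨α, hα, rfl⟩
      exact hα
  · rintro ⟨S, rfl⟩
    intro p hp lam
    have hle : Submodule.map (bind₁ (fun i => (C (lam i) : MvPolynomial (Fin d) ℝ) * X i)).toLinearMap
        (Submodule.span ℝ ((fun α => monomial α (1 : ℝ)) '' S))
        ≤ Submodule.span ℝ ((fun α => monomial α (1 : ℝ)) '' S) := by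
      rw [Submodule.map_span_le]
      rintro _ ⟨α, hα, rfl⟩
      simp only [AlgHom.toLinearMap_apply]
      rw [dilate_monomial_one]
      exact Submodule.smul_mem _ _ (Submodule.subset_span ⟨α, hα, rfl⟩)
    exact hle ⟨p, hp, rfl⟩
end

section
/- Fix a positive integer d and natural numbers N₁,…,N_d, and let V be the linear span in ℝ[x₁,…,x_d] of the monomials {x^α : α ∈ ℕ^d and α_k ≤ N_k for at least one index k}. If (p_n) is a sequence of polynomials in V converging pointwise on ℝ^d to a polynomial p, then p belongs to V. -/
section AuxStmt5
open Polynomial fwdDiff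

noncomputable def dpoly (q : ℝ[X]) : ℝ[X] := q.comp (X + C 1) - q

noncomputable def Gpoly (m n : ℕ) : ℝ[X] := dpoly^[m] (X ^ n)

lemma compFun_bridge (m : ℕ) (q : ℝ[X]) :
    (fwdDiff (1 : ℝ[X]))^[m] (fun y => q.comp y) = fun y => (dpoly^[m] q).comp y := by
  induction m generalizing q with
  | zero => simp
  | succ m ih =>
    rw [Function.iterate_succ_apply, Function.iterate_succ_apply]
    rw [show fwdDiff (1 : ℝ[X]) (fun y => q.comp y) = fun y => (dpoly q).comp y from ?_, ih]
    funext y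
    simp [fwdDiff, dpoly, sub_comp, comp_assoc, add_comp]

lemma Gpoly_eq_sum (m n : ℕ) :
    Gpoly m n = ∑ j ∈ Finset.range (m + 1),
      Polynomial.C ((-1 : ℝ) ^ (m - j) * (m.choose j)) * (X + Polynomial.C (j : ℝ)) ^ n := by
  have h := fwdDiff_iter_eq_sum_shift (1 : ℝ[X]) (fun y => (X ^ n : ℝ[X]).comp y) m X
  rw [compFun_bridge] at h
  simp only [pow_comp, X_comp, comp_X] at h
  rw [Gpoly, h]
  refine Finset.sum_congr rfl fun j _ => ?_
  rw [zsmul_eq_mul, nsmul_eq_mul, mul_one]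
  have h1 : ((j : ℝ[X])) = Polynomial.C (j : ℝ) := by simp
  have h2 : (((-1 : ℤ) ^ (m - j) * (m.choose j) : ℤ) : ℝ[X])
      = Polynomial.C ((-1 : ℝ) ^ (m - j) * (m.choose j)) := by push_cast; simp
  rw [h1, h2]

lemma coeff_comp_X_add_one (q : ℝ[X]) (t : ℕ) :
    (q.comp (X + C 1)).coeff t
      = ∑ i ∈ Finset.range (q.natDegree + 1), q.coeff i * (i.choose t : ℝ) := by
  rw [comp_eq_sum_left, Polynomial.sum, finset_sum_coeff]
  rw [Finset.sum_subset supp_subset_range_natDegree_succ]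
  · refine Finset.sum_congr rfl fun i _ => ?_
    rw [coeff_C_mul, C_1, coeff_X_add_one_pow]
  · intro i _ hi
    rw [notMem_support_iff.mp hi]; simp

lemma dpoly_natDegree_le (q : ℝ[X]) (e : ℕ) (h : q.natDegree ≤ e + 1) :
    (dpoly q).natDegree ≤ e := by
  refine natDegree_le_iff_coeff_eq_zero.mpr fun t ht => ?_
  rw [dpoly, coeff_sub, coeff_comp_X_add_one]
  rw [Finset.sum_eq_single t]
  · simp
  · intro i hi hit
    have hi' : i < t := lt_of_le_of_ne
      (le_trans (Nat.lt_succ_iff.mp (Finset.mem_range.mp hi)) (le_trans h ht)) hit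
    rw [Nat.choose_eq_zero_of_lt hi', Nat.cast_zero, mul_zero]
  · intro hti
    have h2 : ¬ t < q.natDegree + 1 := fun hc => hti (Finset.mem_range.mpr hc)
    rw [coeff_eq_zero_of_natDegree_lt (by omega), zero_mul]

lemma dpoly_coeff (q : ℝ[X]) (e : ℕ) (h : q.natDegree ≤ e + 1) :
    (dpoly q).coeff e = (e + 1 : ℝ) * q.coeff (e + 1) := by
  rw [dpoly, coeff_sub, coeff_comp_X_add_one]
  have hsub : Finset.range (q.natDegree + 1) ⊆ Finset.range (e + 2) := by
    exact Finset.range_subset_range.mpr (by omega)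
  rw [Finset.sum_subset hsub (fun i hi hi' => by
    have h2 : ¬ i < q.natDegree + 1 := fun hc => hi' (Finset.mem_range.mpr hc)
    rw [coeff_eq_zero_of_natDegree_lt (by omega), zero_mul])]
  rw [Finset.sum_range_succ, Finset.sum_range_succ, Nat.choose_succ_self_right,
    Nat.choose_self, Finset.sum_eq_zero (fun i hi => by
      rw [Nat.choose_eq_zero_of_lt (Finset.mem_range.mp hi), Nat.cast_zero, mul_zero])]
  push_cast
  ring

lemma Gpoly_facts (m : ℕ) : ∀ n : ℕ,
    (n < m → Gpoly m n = 0) ∧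
    (m ≤ n → (Gpoly m n).natDegree ≤ n - m ∧
      (Gpoly m n).coeff (n - m) = (n.descFactorial m : ℝ)) := by
  induction m with
  | zero =>
    intro n
    refine ⟨fun h => absurd h (Nat.not_lt_zero n), fun _ => ?_⟩
    simp [Gpoly]
  | succ m ih =>
    intro n
    have hit : Gpoly (m + 1) n = dpoly (Gpoly m n) := by
      rw [Gpoly, Function.iterate_succ_apply', Gpoly]
    constructor
    · intro hn
      rcases lt_or_eq_of_le (Nat.lt_succ_iff.mp hn) with h | h
      · rw [hit, (ih n).1 h, dpoly, zero_comp, sub_zero]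
      · subst h
        have h0 : (Gpoly n n).natDegree ≤ 0 := by simpa using ((ih n).2 le_rfl).1
        obtain ⟨a, ha⟩ : ∃ a, Gpoly n n = C a :=
          ⟨(Gpoly n n).coeff 0, (Polynomial.eq_C_of_natDegree_le_zero h0)⟩
        rw [hit, ha, dpoly, C_comp, sub_self]
    · intro hmn
      have hmn' : m ≤ n := le_trans (Nat.le_succ m) hmn
      obtain ⟨hdeg, hcoeff⟩ := (ih n).2 hmn'
      have he : n - m = (n - (m + 1)) + 1 := by omega
      rw [he] at hdeg hcoeff
      refine ⟨?_, ?_⟩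
      · rw [hit]; exact dpoly_natDegree_le _ _ hdeg
      · rw [hit, dpoly_coeff _ _ hdeg, hcoeff]
        have : n.descFactorial (m + 1) = (n - m) * n.descFactorial m := by
          rw [Nat.descFactorial_succ]
        rw [this]
        push_cast [he]
        ring

open MvPolynomial

variable {d : ℕ} (N : Fin d → ℕ)

noncomputable def Fk (N : Fin d → ℕ) (k : Fin d) (n : ℕ) : MvPolynomial (Fin d) ℝ :=
  Polynomial.aeval (MvPolynomial.X k) (Gpoly (N k + 1) n)

noncomputable def Dmon (N : Fin d → ℕ) (α : Fin d →₀ ℕ) : MvPolynomial (Fin d) ℝ :=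
  ∏ k, Fk N k (α k)

noncomputable def cc (N : Fin d → ℕ) (ε : Fin d → ℕ) : ℝ :=
  ∏ k, ((-1 : ℝ) ^ (N k + 1 - ε k) * ((N k + 1).choose (ε k)))

noncomputable def Dop (N : Fin d → ℕ) :
    MvPolynomial (Fin d) ℝ →ₗ[ℝ] MvPolynomial (Fin d) ℝ :=
  ∑ ε ∈ Fintype.piFinset (fun k => Finset.range (N k + 2)),
    cc N ε • (MvPolynomial.aeval
      (fun k => MvPolynomial.X k + MvPolynomial.C ((ε k : ℝ)))).toLinearMap

lemma Fk_eq_sum (k : Fin d) (n : ℕ) : Fk N k n = ∑ j ∈ Finset.range (N k + 2),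
    MvPolynomial.C ((-1 : ℝ) ^ (N k + 1 - j) * ((N k + 1).choose j)) *
      (MvPolynomial.X k + MvPolynomial.C (j : ℝ)) ^ n := by
  rw [Fk, Gpoly_eq_sum, map_sum]
  refine Finset.sum_congr rfl fun j _ => ?_
  rw [map_mul, map_pow, map_add, Polynomial.aeval_X, Polynomial.aeval_C, Polynomial.aeval_C]
  simp [MvPolynomial.algebraMap_eq]

lemma Dop_monomial (α : Fin d →₀ ℕ) :
    Dop N (monomial α (1 : ℝ)) = Dmon N α := by
  have hmono : (MvPolynomial.monomial α (1 : ℝ)) = ∏ k, MvPolynomial.X k ^ α k := by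
    rw [MvPolynomial.monomial_eq, MvPolynomial.C_1, one_mul, Finsupp.prod_pow]
  rw [Dop, LinearMap.sum_apply]
  have step : ∀ ε ∈ Fintype.piFinset (fun k => Finset.range (N k + 2)),
      (cc N ε • (MvPolynomial.aeval
          (fun k => MvPolynomial.X k + MvPolynomial.C ((ε k : ℝ)))).toLinearMap)
        (monomial α (1 : ℝ))
      = ∏ k, (MvPolynomial.C ((-1 : ℝ) ^ (N k + 1 - ε k) * ((N k + 1).choose (ε k))) *
          (MvPolynomial.X k + MvPolynomial.C ((ε k : ℝ))) ^ (α k)) := by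
    intro ε _
    rw [LinearMap.smul_apply, AlgHom.toLinearMap_apply, hmono, map_prod]
    simp only [map_pow, MvPolynomial.aeval_X]
    rw [MvPolynomial.smul_eq_C_mul, cc, map_prod, ← Finset.prod_mul_distrib]
  have hD : Dmon N α = ∑ ε ∈ Fintype.piFinset (fun k => Finset.range (N k + 2)),
      ∏ k, (MvPolynomial.C ((-1 : ℝ) ^ (N k + 1 - ε k) * ((N k + 1).choose (ε k))) *
        (MvPolynomial.X k + MvPolynomial.C ((ε k : ℝ))) ^ (α k)) := by
    rw [Dmon, Finset.prod_congr rfl (fun k _ => Fk_eq_sum N k (α k)),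
      Finset.prod_univ_sum]
  rw [Finset.sum_congr rfl step, hD]

lemma Dmon_good (α : Fin d →₀ ℕ) (k : Fin d) (h : α k ≤ N k) : Dmon N α = 0 :=
  Finset.prod_eq_zero (Finset.mem_univ k) (by
    rw [Fk, (Gpoly_facts (N k + 1) (α k)).1 (by omega), map_zero])

lemma Dop_eval (x : Fin d → ℝ) (q : MvPolynomial (Fin d) ℝ) :
    eval x (Dop N q) = ∑ ε ∈ Fintype.piFinset (fun k => Finset.range (N k + 2)),
      cc N ε * eval (fun k => x k + (ε k : ℝ)) q := by
  rw [Dop, LinearMap.sum_apply, map_sum]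
  refine Finset.sum_congr rfl fun ε _ => ?_
  rw [LinearMap.smul_apply, AlgHom.toLinearMap_apply, MvPolynomial.smul_eq_C_mul,
    map_mul, MvPolynomial.eval_C]
  congr 1
  have heq : ∀ (y : Fin d → ℝ) (r : MvPolynomial (Fin d) ℝ),
      MvPolynomial.aeval (R := ℝ) y r = eval y r := fun y r => by
    rw [MvPolynomial.aeval_def, Algebra.algebraMap_self]
    rfl
  have := MvPolynomial.comp_aeval_apply
    (f := fun k => MvPolynomial.X k + MvPolynomial.C ((ε k : ℝ)))
    (MvPolynomial.aeval (R := ℝ) x) q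
  rw [heq] at this
  rw [this, heq]
  have hfun : (fun i : Fin d => MvPolynomial.aeval x
      (MvPolynomial.X i + MvPolynomial.C ((ε i : ℝ)))) = fun k => x k + (ε k : ℝ) := by
    funext k
    simp [heq]
  rw [hfun]

lemma bad_part_zero (b : MvPolynomial (Fin d) ℝ)
    (hbad : ∀ α ∈ b.support, ∀ k : Fin d, N k + 1 ≤ α k)
    (hD : Dop N b = 0) : b = 0 := by
  by_contra hb
  -- decompose b
  have hDb : Dop N b = ∑ α ∈ b.support, coeff α b • Dmon N α := by
    conv_lhs => rw [b.as_sum]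
    rw [map_sum]
    refine Finset.sum_congr rfl fun α _ => ?_
    rw [show (monomial α) (coeff α b) = coeff α b • (monomial α (1:ℝ)) by
      rw [MvPolynomial.smul_monomial, smul_eq_mul, mul_one], map_smul, Dop_monomial]
  -- bound on exponents
  set B : ℕ := (b.support.sup fun α => Finset.univ.sup fun k => α k) + 1 with hBdef
  have hB : ∀ α ∈ b.support, ∀ k : Fin d, α k < B := by
    intro α hα k
    have h1 : α k ≤ Finset.univ.sup fun k => α k := Finset.le_sup (Finset.mem_univ k)
    have h2 : (Finset.univ.sup fun k => α k) ≤ b.support.sup fun α => Finset.univ.sup fun k => α k :=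
      Finset.le_sup (f := fun α : Fin d →₀ ℕ => Finset.univ.sup fun k => α k) hα
    omega
  -- weighted degree functions
  set T : (Fin d →₀ ℕ) → ℕ := fun α => ∑ k, (α k - (N k + 1)) * B ^ (k : ℕ) with hTdef
  set S : (Fin d →₀ ℕ) → ℕ := fun α => ∑ k, α k * B ^ (k : ℕ) with hSdef
  have hTS : ∀ α ∈ b.support, T α + (∑ k, (N k + 1) * B ^ (k : ℕ)) = S α := by
    intro α hα
    rw [hTdef, hSdef, ← Finset.sum_add_distrib]
    refine Finset.sum_congr rfl fun k _ => ?_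
    rw [← add_mul, Nat.sub_add_cancel (hbad α hα k)]
  have hSinj : ∀ α ∈ b.support, ∀ β ∈ b.support, S α = S β → α = β := by
    intro α hα β hβ hS
    have hBpos : 0 < B := by omega
    have h1 : (finFunctionFinEquiv (fun k => (⟨α k, hB α hα k⟩ : Fin B)) : ℕ)
        = (finFunctionFinEquiv (fun k => (⟨β k, hB β hβ k⟩ : Fin B)) : ℕ) := by
      rw [finFunctionFinEquiv_apply, finFunctionFinEquiv_apply]
      exact hS
    have h2 := finFunctionFinEquiv.injective (Fin.val_injective h1)
    ext k
    exact congrArg Fin.val (congrFun h2 k)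
  -- the weighted substitution
  set φ : MvPolynomial (Fin d) ℝ →ₐ[ℝ] Polynomial ℝ :=
    MvPolynomial.aeval (fun k => (Polynomial.X : Polynomial ℝ) ^ B ^ (k : ℕ)) with hφdef
  set P : (Fin d →₀ ℕ) → Polynomial ℝ :=
    fun α => ∏ k, (Gpoly (N k + 1) (α k)).comp (Polynomial.X ^ B ^ (k : ℕ)) with hPdef
  have hφDmon : ∀ α, φ (Dmon N α) = P α := by
    intro α
    rw [Dmon, map_prod]
    refine Finset.prod_congr rfl fun k _ => ?_
    rw [Fk, ← Polynomial.aeval_algHom_apply, MvPolynomial.aeval_X]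
    rw [Polynomial.aeval_def, Polynomial.algebraMap_eq, Polynomial.comp]
  -- facts about the factors, for bad α
  have hfact : ∀ α ∈ b.support, P α ≠ 0 ∧ (P α).natDegree = T α := by
    intro α hα
    have hone : ∀ k : Fin d, ((Polynomial.X : Polynomial ℝ) ^ B ^ (k : ℕ)).natDegree
        = B ^ (k : ℕ) := fun k => by simp
    have hf : ∀ k : Fin d, (Gpoly (N k + 1) (α k)).comp (Polynomial.X ^ B ^ (k : ℕ)) ≠ 0 := by
      intro k
      have hle := hbad α hα k
      obtain ⟨hdeg, hco⟩ := (Gpoly_facts (N k + 1) (α k)).2 hle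
      have hdne : (α k).descFactorial (N k + 1) ≠ 0 := fun h => by
        have := Nat.descFactorial_eq_zero_iff_lt.mp h; omega
      have hco' : (Gpoly (N k + 1) (α k)).coeff (α k - (N k + 1)) ≠ 0 := by
        rw [hco]; exact_mod_cast hdne
      have hg : Gpoly (N k + 1) (α k) ≠ 0 := fun h => hco' (by simp [h])
      have hBk : ((Polynomial.X : Polynomial ℝ) ^ B ^ (k : ℕ)).natDegree ≠ 0 := by
        rw [hone k]; positivity
      rw [Ne, ← Polynomial.leadingCoeff_eq_zero, Polynomial.leadingCoeff_comp hBk]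
      simp [Polynomial.leadingCoeff_eq_zero, hg]
    constructor
    · exact Finset.prod_ne_zero_iff.mpr fun k _ => hf k
    · rw [hPdef, Polynomial.natDegree_prod _ _ (fun k _ => hf k)]
      refine Finset.sum_congr rfl fun k _ => ?_
      rw [Polynomial.natDegree_comp, hone k]
      congr 1
      have hle := hbad α hα k
      obtain ⟨hdeg, hco⟩ := (Gpoly_facts (N k + 1) (α k)).2 hle
      have hdne : (α k).descFactorial (N k + 1) ≠ 0 := fun h => by
        have := Nat.descFactorial_eq_zero_iff_lt.mp h; omega
      have hco' : (Gpoly (N k + 1) (α k)).coeff (α k - (N k + 1)) ≠ 0 := by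
        rw [hco]; exact_mod_cast hdne
      exact le_antisymm hdeg (Polynomial.le_natDegree_of_ne_zero hco')
  -- pick a maximizer of T
  obtain ⟨αm, hαm, hmax⟩ := Finset.exists_max_image b.support T
    (MvPolynomial.support_nonempty.mpr hb)
  -- compute the top coefficient of φ (Dop N b)
  have hzero : φ (Dop N b) = 0 := by rw [hD, map_zero]
  have : (φ (Dop N b)).coeff (T αm) = coeff αm b * (P αm).leadingCoeff := by
    rw [hDb, map_sum]
    rw [Polynomial.finset_sum_coeff]
    rw [Finset.sum_eq_single_of_mem αm hαm]
    · rw [map_smul, hφDmon, Polynomial.coeff_smul, smul_eq_mul,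
        ← (hfact αm hαm).2, Polynomial.coeff_natDegree]
    · intro β hβ hne
      rw [map_smul, hφDmon, Polynomial.coeff_smul, smul_eq_mul]
      have hlt : T β < T αm := by
        refine lt_of_le_of_ne (hmax β hβ) fun h => hne ?_
        have := hTS β hβ
        have := hTS αm hαm
        exact hSinj β hβ αm hαm (by omega)
      rw [Polynomial.coeff_eq_zero_of_natDegree_lt (by rw [(hfact β hβ).2]; exact hlt),
        mul_zero]
  rw [hzero, Polynomial.coeff_zero] at this
  have hlc : (P αm).leadingCoeff ≠ 0 :=
    Polynomial.leadingCoeff_ne_zero.mpr (hfact αm hαm).1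
  have hcoeffm : coeff αm b ≠ 0 := MvPolynomial.mem_support_iff.mp hαm
  exact hcoeffm (by
    rcases mul_eq_zero.mp this.symm with h | h
    · exact h
    · exact absurd h hlc)

end AuxStmt5

open MvPolynomial Filter

theorem stmt_5 (d : ℕ) (hd : 0 < d) (N : Fin d → ℕ)
    (V : Submodule ℝ (MvPolynomial (Fin d) ℝ))
    (hV : V = Submodule.span ℝ {q : MvPolynomial (Fin d) ℝ |
        ∃ α : Fin d →₀ ℕ, (∃ k : Fin d, α k ≤ N k) ∧ q = monomial α (1 : ℝ)})
    (pn : ℕ → MvPolynomial (Fin d) ℝ) (hpn : ∀ n, pn n ∈ V)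
    (p : MvPolynomial (Fin d) ℝ)
    (hconv : ∀ x : Fin d → ℝ,
      Tendsto (fun n => eval x (pn n)) atTop (nhds (eval x p))) :
    p ∈ V := by
  classical
  have hDV : ∀ q ∈ V, Dop N q = 0 := by
    intro q hq
    rw [hV] at hq
    refine Submodule.span_induction ?_ ?_ ?_ ?_ hq
    · rintro q ⟨α, ⟨k, hk⟩, rfl⟩
      rw [Dop_monomial, Dmon_good N α k hk]
    · exact map_zero _
    · intro a b _ _ ha hb; rw [map_add, ha, hb, add_zero]
    · intro c a _ ha; rw [map_smul, ha, smul_zero]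
  set b : MvPolynomial (Fin d) ℝ :=
    ∑ α ∈ p.support.filter (fun α => ¬ ∃ k, α k ≤ N k), monomial α (coeff α p) with hbdef
  set g : MvPolynomial (Fin d) ℝ :=
    ∑ α ∈ p.support.filter (fun α => ∃ k, α k ≤ N k), monomial α (coeff α p) with hgdef
  have hpgb : p = g + b := by
    conv_lhs => rw [p.as_sum]
    rw [hgdef, hbdef, Finset.sum_filter_add_sum_filter_not]
  have hgV : g ∈ V := by
    rw [hV]
    refine Submodule.sum_mem _ fun α hα => ?_
    rcases Finset.mem_filter.mp hα with ⟨_, hk⟩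
    have hmono : (monomial α) (coeff α p) = coeff α p • (monomial α (1 : ℝ)) := by
      rw [MvPolynomial.smul_monomial, smul_eq_mul, mul_one]
    rw [hmono]
    exact Submodule.smul_mem _ _ (Submodule.subset_span ⟨α, hk, rfl⟩)
  have hconvb : ∀ x : Fin d → ℝ,
      Tendsto (fun n => eval x (pn n - g)) atTop (nhds (eval x b)) := by
    intro x
    have hxb : eval x b = eval x p - eval x g := by
      rw [hpgb, map_add]; ring
    rw [hxb]
    simp only [map_sub]
    exact (hconv x).sub tendsto_const_nhds
  have hDb : Dop N b = 0 := by
    apply MvPolynomial.funext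
    intro x
    have hq0 : ∀ n, eval x (Dop N (pn n - g)) = 0 := fun n => by
      rw [hDV _ (Submodule.sub_mem V (hpn n) hgV), map_zero]
    have htend : Tendsto (fun n => eval x (Dop N (pn n - g))) atTop
        (nhds (eval x (Dop N b))) := by
      simp only [Dop_eval]
      exact tendsto_finset_sum _ fun ε _ => (hconvb _).const_mul _
    rw [tendsto_congr hq0] at htend
    rw [map_zero]
    exact tendsto_nhds_unique htend tendsto_const_nhds
  have hbad : ∀ α ∈ b.support, ∀ k : Fin d, N k + 1 ≤ α k := by
    intro α hα k
    have hcoeff : coeff α b ≠ 0 := MvPolynomial.mem_support_iff.mp hα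
    by_contra hcon
    have hαnot : α ∉ p.support.filter (fun α => ¬ ∃ k, α k ≤ N k) := by
      intro hmem
      exact (Finset.mem_filter.mp hmem).2 ⟨k, by omega⟩
    apply hcoeff
    rw [hbdef, MvPolynomial.coeff_sum]
    refine Finset.sum_eq_zero fun β hβ => ?_
    rw [MvPolynomial.coeff_monomial, if_neg]
    intro hβα
    exact hαnot (hβα ▸ hβ)
  have hb0 : b = 0 := bad_part_zero N b hbad hDb
  rw [hpgb, hb0, add_zero]
  exact hgV
end

section
/- Let V be an ℝ-linear subspace of ℝ[x₁,…,x_d] that is both translation invariant and dilation invariant. If the monomial x^β belongs to V and α ∈ ℕ^d satisfies α ≤ β componentwise, then the monomial x^α also belongs to V. That is, the set of multi-indices of monomials contained in V is downward closed under the componentwise partial order. -/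
open MvPolynomial

lemma vdm_extract {M : Type*} [AddCommGroup M] [Module ℝ M] (V : Submodule ℝ M)
    (n : ℕ) (v : Fin n → M) (h : ∀ t : ℝ, ∑ k : Fin n, t ^ (k : ℕ) • v k ∈ V) :
    ∀ k, v k ∈ V := by
  intro i
  set A : Matrix (Fin n) (Fin n) ℝ := Matrix.vandermonde (fun j => (j : ℝ)) with hA
  have hdet : A.det ≠ 0 := by
    rw [Matrix.det_vandermonde]
    refine Finset.prod_ne_zero_iff.2 fun j _ => Finset.prod_ne_zero_iff.2 fun l hl => ?_
    have : (j : ℕ) < l := by simpa [Finset.mem_Ioi] using hl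
    have : (j : ℝ) < l := by exact_mod_cast this
    linarith
  have hinv : A⁻¹ * A = 1 := Matrix.nonsing_inv_mul A (isUnit_iff_ne_zero.2 hdet)
  have : v i = ∑ j, A⁻¹ i j • ∑ k, A j k • v k := by
    simp_rw [Finset.smul_sum, smul_smul]
    rw [Finset.sum_comm]
    simp_rw [← Finset.sum_smul, ← Matrix.mul_apply, hinv]
    simp [Matrix.one_apply]
  rw [this]
  exact Submodule.sum_mem V fun j _ => Submodule.smul_mem V _
    (by simpa [hA, Matrix.vandermonde] using h (j : ℝ))

lemma trans_expand (d : ℕ) (β : Fin d →₀ ℕ) (i : Fin d) (t : ℝ) :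
    bind₁ (fun j => (X j : MvPolynomial (Fin d) ℝ) + C (if j = i then t else 0)) (monomial β 1)
    = ∑ k ∈ Finset.range (β i + 1),
        (t ^ (β i - k) * ((β i).choose k : ℝ)) • monomial (β.update i k) (1 : ℝ) := by
  set m := β i with hm
  set γ := β.update i 0 with hγ
  have hβγ : β = γ + Finsupp.single i m := by
    ext j
    rcases eq_or_ne j i with hj | hj
    · subst hj; simp [hγ, Finsupp.update, hm]
    · simp [hγ, Finsupp.update, hj, Finsupp.single_apply, Ne.symm hj]
  have hsplit : (monomial β (1 : ℝ)) = monomial γ 1 * X i ^ m := by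
    rw [X_pow_eq_monomial, monomial_mul, one_mul, hβγ]
  rw [hsplit, map_mul, map_pow, bind₁_X_right]
  have hγi : bind₁ (fun j => (X j : MvPolynomial (Fin d) ℝ) + C (if j = i then t else 0))
      (monomial γ 1) = monomial γ 1 := by
    rw [bind₁_monomial, monomial_eq]
    congr 1
    refine Finset.prod_congr rfl fun j hj => ?_
    have : j ≠ i := by
      intro h; subst h
      simp [hγ, Finsupp.update, Finsupp.mem_support_iff] at hj
    simp [this]
  rw [hγi]
  have hadd : ((X i : MvPolynomial (Fin d) ℝ) + C (if i = i then t else 0)) ^ m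
      = ∑ k ∈ Finset.range (m + 1), X i ^ k * C t ^ (m - k) * ((m.choose k : ℕ) : MvPolynomial (Fin d) ℝ) := by
    simp only [if_pos rfl]
    exact add_pow _ _ _
  rw [hadd, Finset.mul_sum]
  refine Finset.sum_congr rfl fun k hk => ?_
  have hupd : γ + Finsupp.single i k = β.update i k := by
    ext j
    rcases eq_or_ne j i with hj | hj
    · subst hj; simp [hγ, Finsupp.update]
    · simp [hγ, Finsupp.update, hj, Finsupp.single_apply, Ne.symm hj]
  rw [← hupd]
  rw [← map_natCast (C : ℝ →+* MvPolynomial (Fin d) ℝ) (m.choose k), ← C_pow,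
    X_pow_eq_monomial]
  simp only [C_apply, monomial_mul, smul_monomial]
  congr 1
  · ext j; simp
  · simp

lemma step_down (d : ℕ) (V : Submodule ℝ (MvPolynomial (Fin d) ℝ))
    (htrans : ∀ p ∈ V, ∀ y : Fin d → ℝ,
      bind₁ (fun i => (X i : MvPolynomial (Fin d) ℝ) + C (y i)) p ∈ V)
    (β : Fin d →₀ ℕ) (hβ : monomial β (1 : ℝ) ∈ V) (i : Fin d) (k : ℕ) (hk : k ≤ β i) :
    monomial (β.update i k) (1 : ℝ) ∈ V := by
  set m := β i with hm
  have hV : ∀ t : ℝ, ∑ l : Fin (m + 1),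
      t ^ (l : ℕ) • ((m.choose (m - (l : ℕ)) : ℝ) • monomial (β.update i (m - (l : ℕ))) (1 : ℝ)) ∈ V := by
    intro t
    have h1 := htrans _ hβ (fun j => if j = i then t else 0)
    rw [trans_expand] at h1
    rw [← Finset.sum_range_reflect] at h1
    rw [Fin.sum_univ_eq_sum_range
      (fun l => t ^ l • ((m.choose (m - l) : ℝ) • monomial (β.update i (m - l)) (1 : ℝ))) (m + 1)]
    have heq : ∀ l ∈ Finset.range (m + 1),
        (t ^ (m - (m + 1 - 1 - l)) * ((m.choose (m + 1 - 1 - l) : ℕ) : ℝ)) •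
          monomial (β.update i (m + 1 - 1 - l)) (1 : ℝ)
        = t ^ l • ((m.choose (m - l) : ℝ) • monomial (β.update i (m - l)) (1 : ℝ)) := by
      intro l hl
      have hl' : l ≤ m := by simpa [Nat.lt_succ_iff] using hl
      have h2 : m + 1 - 1 - l = m - l := by omega
      have h3 : m - (m - l) = l := by omega
      rw [h2, h3, smul_smul]
    rw [← Finset.sum_congr rfl heq]
    exact h1
  have hall := vdm_extract V (m + 1) _ hV
  have hkm := hall ⟨m - k, by omega⟩
  have h4 : m - (m - k) = k := by omega
  simp only [h4] at hkm
  have hc : ((m.choose k : ℕ) : ℝ) ≠ 0 := by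
    exact_mod_cast (Nat.choose_pos hk).ne'
  have := Submodule.smul_mem V ((m.choose k : ℝ))⁻¹ hkm
  rwa [smul_smul, inv_mul_cancel₀ hc, one_smul] at this

lemma down_closed (d : ℕ) (V : Submodule ℝ (MvPolynomial (Fin d) ℝ))
    (htrans : ∀ p ∈ V, ∀ y : Fin d → ℝ,
      bind₁ (fun i => (X i : MvPolynomial (Fin d) ℝ) + C (y i)) p ∈ V) :
    ∀ N : ℕ, ∀ β : Fin d →₀ ℕ, (∑ j, β j) = N → monomial β (1 : ℝ) ∈ V →
      ∀ α : Fin d →₀ ℕ, α ≤ β → monomial α (1 : ℝ) ∈ V := by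
  intro N
  induction N using Nat.strong_induction_on with
  | _ N ih =>
    intro β hN hβ α hαβ
    have hle : ∀ j, α j ≤ β j := fun j => Finsupp.le_def.mp hαβ j
    by_cases hab : α = β
    · subst hab; exact hβ
    · have : ∃ i, α i < β i := by
        by_contra h; push_neg at h
        exact hab (Finsupp.ext fun j => le_antisymm (hle j) (h j))
      obtain ⟨i, hi⟩ := this
      set β' := β.update i (β i - 1) with hβ'def
      have hβ' : monomial β' (1 : ℝ) ∈ V :=
        step_down d V htrans β hβ i (β i - 1) (Nat.sub_le _ _)
      have hcoe : ∀ j, β' j = Function.update β i (β i - 1) j := fun j => by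
        rw [hβ'def, Finsupp.coe_update]
      have hsum : (∑ j, β' j) < N := by
        rw [← hN]
        have h1 : ∑ j, β' j = ∑ j, Function.update (⇑β) i (β i - 1) j :=
          Finset.sum_congr rfl fun j _ => hcoe j
        rw [h1, Finset.sum_update_of_mem (Finset.mem_univ i), ← Finset.erase_eq,
          ← Finset.add_sum_erase Finset.univ _ (Finset.mem_univ i)]
        have : 0 < β i := lt_of_le_of_lt (Nat.zero_le _) hi
        omega
      refine ih _ hsum β' rfl hβ' α (Finsupp.le_def.mpr fun j => ?_)
      rw [hcoe j]
      rcases eq_or_ne j i with hj | hj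
      · subst hj; simp; omega
      · simp [Function.update_of_ne hj]; exact hle j

theorem stmt_6 (d : ℕ) (V : Submodule ℝ (MvPolynomial (Fin d) ℝ))
    (htrans : ∀ p ∈ V, ∀ y : Fin d → ℝ,
      bind₁ (fun i => (X i : MvPolynomial (Fin d) ℝ) + C (y i)) p ∈ V)
    (hdil : ∀ p ∈ V, ∀ y : Fin d → ℝ,
      bind₁ (fun i => (C (y i) : MvPolynomial (Fin d) ℝ) * X i) p ∈ V)
    (β : Fin d →₀ ℕ) (hβ : monomial β (1 : ℝ) ∈ V)
    (α : Fin d →₀ ℕ) (hαβ : α ≤ β) :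
    monomial α (1 : ℝ) ∈ V :=
  down_closed d V htrans (∑ j, β j) β rfl hβ α hαβ
end

section
/- Let m be a positive integer and let c be a polynomial in ℝ[x₁,…,x_m]. If the mixed partial derivative ∂^{(1,1,…,1)} (x₁x₂⋯x_m · c), applying one formal partial derivative in each of the m variables to the product of c with the monomial x₁x₂⋯x_m, is the zero polynomial, then c is the zero polynomial. -/
open MvPolynomial

lemma aux_list {m : ℕ} (l : List (Fin m)) (hl : l.Nodup) (d : Fin m →₀ ℕ) (a : ℝ) :
    (l.map fun i => ((pderiv i).toLinearMap : Module.End ℝ (MvPolynomial (Fin m) ℝ))).prod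
      (monomial (d + (l.map fun i => Finsupp.single i 1).sum) a)
    = monomial d (a * (l.map fun i => ((d i : ℝ) + 1)).prod) := by
  induction l generalizing d a with
  | nil => simp
  | cons f l ih =>
    rcases List.nodup_cons.mp hl with ⟨hf, hl'⟩
    have hrw : d + (((f :: l).map fun i => Finsupp.single i 1).sum)
        = (d + Finsupp.single f 1) + (l.map fun i => Finsupp.single i 1).sum := by
      simp [add_assoc]
    rw [List.map_cons, List.prod_cons, Module.End.mul_apply, hrw,
      ih hl' (d + Finsupp.single f 1) a]
    have hmap : (l.map fun i => ((((d + Finsupp.single f 1 : Fin m →₀ ℕ) i : ℕ) : ℝ) + 1))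
        = l.map fun i => ((d i : ℝ) + 1) := by
      apply List.map_congr_left
      intro i hi
      have : i ≠ f := fun h => hf (h ▸ hi)
      simp [Finsupp.single_apply, this.symm]
    rw [hmap]
    rw [show ((pderiv f).toLinearMap : Module.End ℝ (MvPolynomial (Fin m) ℝ))
        ((monomial (d + Finsupp.single f 1)) (a * (l.map fun i => ((d i : ℝ) + 1)).prod))
      = (pderiv f) ((monomial (d + Finsupp.single f 1))
          (a * (l.map fun i => ((d i : ℝ) + 1)).prod)) from rfl, pderiv_monomial]
    have h1 : (d + Finsupp.single f 1 - Finsupp.single f 1) = d := by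
      ext j; by_cases hj : j = f <;> simp [hj, Finsupp.single_apply]
    rw [h1]
    congr 1
    simp [Finsupp.single_apply]
    ring

/-- The mixed partial derivative `∂^{(1,…,1)}`, applying `pderiv i` once in
each of the `m` variables. -/
noncomputable def mixedPDeriv (m : ℕ) :
    Module.End ℝ (MvPolynomial (Fin m) ℝ) :=
  (List.ofFn fun i : Fin m =>
    ((pderiv i).toLinearMap : Module.End ℝ (MvPolynomial (Fin m) ℝ))).prod

lemma mixed_mono {m : ℕ} (d : Fin m →₀ ℕ) (a : ℝ) :
    mixedPDeriv m ((∏ i, (X i : MvPolynomial (Fin m) ℝ)) * monomial d a)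
      = monomial d (a * (((List.finRange m).map fun i => ((d i : ℝ) + 1)).prod)) := by
  have hX : (∏ i : Fin m, (X i : MvPolynomial (Fin m) ℝ))
      = monomial (((List.finRange m).map fun i => Finsupp.single i 1).sum) 1 := by
    rw [← Fin.sum_univ_def, monomial_sum_one]
    rfl
  rw [hX, monomial_mul, one_mul, mixedPDeriv, List.ofFn_eq_map,
    show ((List.finRange m).map fun i => Finsupp.single i 1).sum + d
      = d + ((List.finRange m).map fun i => Finsupp.single i 1).sum from add_comm _ _]
  exact aux_list _ (List.nodup_finRange m) d a

lemma mixed_coeff {m : ℕ} (c : MvPolynomial (Fin m) ℝ) (d : Fin m →₀ ℕ) :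
    coeff d (mixedPDeriv m ((∏ i, (X i : MvPolynomial (Fin m) ℝ)) * c))
      = (((List.finRange m).map fun i => ((d i : ℝ) + 1)).prod) * coeff d c := by
  induction c using MvPolynomial.induction_on' with
  | monomial e a =>
    rw [mixed_mono]
    simp only [coeff_monomial]
    split
    · next he => subst he; ring
    · ring
  | add p q hp hq =>
    rw [mul_add, map_add, coeff_add, hp, hq, coeff_add]
    ring

theorem stmt_12 (m : ℕ) (hm : 0 < m) (c : MvPolynomial (Fin m) ℝ)
    (h : mixedPDeriv m ((∏ i, (X i : MvPolynomial (Fin m) ℝ)) * c) = 0) :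
    c = 0 := by
  ext d
  have := mixed_coeff c d
  rw [h, coeff_zero] at this
  have hpos : (((List.finRange m).map fun i => ((d i : ℝ) + 1)).prod) ≠ 0 := by
    refine ne_of_gt (List.prod_pos fun x hx => ?_)
    rcases List.mem_map.mp hx with ⟨i, -, rfl⟩
    positivity
  have := (mul_eq_zero.mp this.symm).resolve_left hpos
  simpa using this
end

section
/- Let W be an ℝ-linear subspace of ℝ[x,y] (polynomials in two variables) that is both translation invariant and dilation invariant, and suppose W contains the polynomial (x+y)^n for every natural number n. Then W is the whole polynomial ring ℝ[x,y]. -/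
open MvPolynomial

/-- Vandermonde coefficient extraction: if a "polynomial in t" with vector
coefficients lies in a submodule for all real t, each coefficient lies in it. -/
lemma extract_coeffs {V : Type*} [AddCommGroup V] [Module ℝ V]
    (W : Submodule ℝ V) (n : ℕ) (v : Fin n → V)
    (h : ∀ t : ℝ, (∑ k : Fin n, t ^ (k : ℕ) • v k) ∈ W) : ∀ k, v k ∈ W := by
  classical
  intro k
  set M : Matrix (Fin n) (Fin n) ℝ := Matrix.vandermonde (fun j => (j : ℝ)) with hM
  have hdet : M.det ≠ 0 := by
    rw [hM, Matrix.det_vandermonde]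
    refine Finset.prod_ne_zero_iff.mpr fun i _ => Finset.prod_ne_zero_iff.mpr fun j hj => ?_
    have hij : (i : ℕ) < (j : ℕ) := Fin.lt_def.mp (Finset.mem_Ioi.mp hj)
    have : (i : ℝ) < (j : ℝ) := by exact_mod_cast hij
    linarith
  have hNM : M⁻¹ * M = 1 := Matrix.nonsing_inv_mul M (isUnit_iff_ne_zero.mpr hdet)
  have key : v k = ∑ j : Fin n, (M⁻¹ k j) • (∑ l : Fin n, ((j : ℕ) : ℝ) ^ (l : ℕ) • v l) := by
    have : ∀ j l : Fin n, ((j : ℕ) : ℝ) ^ (l : ℕ) = M j l := by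
      intro j l; simp [hM, Matrix.vandermonde]
    simp_rw [this, Finset.smul_sum, smul_smul]
    rw [Finset.sum_comm]
    have : ∀ l : Fin n, ∑ j : Fin n, (M⁻¹ k j * M j l) • v l = ((M⁻¹ * M) k l) • v l := by
      intro l
      rw [Matrix.mul_apply, Finset.sum_smul]
    simp_rw [this, hNM]
    simp [Matrix.one_apply]
  rw [key]
  exact Submodule.sum_mem _ fun j _ => Submodule.smul_mem _ _ (h _)

theorem stmt_13 (W : Submodule ℝ (MvPolynomial (Fin 2) ℝ))
    (htrans : ∀ p ∈ W, ∀ y : Fin 2 → ℝ,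
      bind₁ (fun i => (X i : MvPolynomial (Fin 2) ℝ) + C (y i)) p ∈ W)
    (hdil : ∀ p ∈ W, ∀ y : Fin 2 → ℝ,
      bind₁ (fun i => (C (y i) : MvPolynomial (Fin 2) ℝ) * X i) p ∈ W)
    (hpow : ∀ n : ℕ, ((X 0 + X 1 : MvPolynomial (Fin 2) ℝ)) ^ n ∈ W) :
    W = ⊤ := by
  classical
  -- Step 1: every pure monomial X0^a * X1^b lies in W.
  have hmono : ∀ a b : ℕ, (X 0 ^ a * X 1 ^ b : MvPolynomial (Fin 2) ℝ) ∈ W := by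
    intro a b
    set n := a + b with hn
    set v : Fin (n + 1) → MvPolynomial (Fin 2) ℝ :=
      fun k => (n.choose (k : ℕ) : ℝ) • (X 1 ^ (k : ℕ) * X 0 ^ (n - (k : ℕ))) with hv
    have hsum : ∀ t : ℝ, (∑ k : Fin (n+1), t ^ (k : ℕ) • v k) ∈ W := by
      intro t
      have hd := hdil _ (hpow n) ![1, t]
      have heq : bind₁ (fun i => (C (![1, t] i) : MvPolynomial (Fin 2) ℝ) * X i)
          ((X 0 + X 1 : MvPolynomial (Fin 2) ℝ) ^ n)
          = (C t * X 1 + X 0 : MvPolynomial (Fin 2) ℝ) ^ n := by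
        rw [map_pow, map_add, bind₁_X_right, bind₁_X_right]
        simp [add_comm]
      have hexp : (C t * X 1 + X 0 : MvPolynomial (Fin 2) ℝ) ^ n
          = ∑ k : Fin (n+1), t ^ (k : ℕ) • v k := by
        rw [add_pow]
        rw [Fin.sum_univ_eq_sum_range
          (fun k => t ^ k • ((n.choose k : ℝ) • (X 1 ^ k * X 0 ^ (n - k))))]
        refine Finset.sum_congr rfl fun k _ => ?_
        rw [mul_pow, smul_smul, smul_eq_C_mul, ← C_pow, C_mul,
          ← map_natCast (C : ℝ →+* MvPolynomial (Fin 2) ℝ)]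
        ring
      rw [heq, hexp] at hd
      exact hd
    have hb : (b : ℕ) < n + 1 := by omega
    have hvb := extract_coeffs W (n + 1) v hsum ⟨b, hb⟩
    have hvb' : ((n.choose b : ℝ)) • (X 1 ^ b * X 0 ^ a : MvPolynomial (Fin 2) ℝ) ∈ W := by
      have : n - b = a := by omega
      simpa [hv, this] using hvb
    have hc : (n.choose b : ℝ) ≠ 0 := by
      have := Nat.choose_pos (show b ≤ n by omega)
      positivity
    have := Submodule.smul_mem W (n.choose b : ℝ)⁻¹ hvb'
    rw [smul_smul, inv_mul_cancel₀ hc, one_smul] at this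
    rw [mul_comm] at this
    exact this
  -- Step 2: conclude W = ⊤.
  rw [eq_top_iff]
  intro p _
  induction p using MvPolynomial.induction_on' with
  | monomial d c =>
    have hd : d = Finsupp.single 0 (d 0) + Finsupp.single 1 (d 1) := by
      ext i
      fin_cases i <;> simp [Finsupp.single_apply]
    have : (monomial d c : MvPolynomial (Fin 2) ℝ)
        = c • (X 0 ^ d 0 * X 1 ^ d 1) := by
      rw [X_pow_eq_monomial, X_pow_eq_monomial, monomial_mul, smul_monomial,
        mul_one, smul_eq_mul, mul_one, ← hd]
    rw [this]
    exact Submodule.smul_mem _ _ (hmono _ _)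
  | add p q hp hq => exact Submodule.add_mem _ (hp trivial) (hq trivial)
end

section
/- Let V be the set of all polynomials in ℝ[x,y] of the form (x,y) ↦ q(x+y) with q a one-variable real polynomial, i.e., the image of Polynomial ℝ under the ring homomorphism sending the variable to X+Y. Then V is a translation-invariant linear subspace of ℝ[x,y], and the quotient vector space ℝ[x,y]/V is infinite-dimensional (V has infinite codimension). -/
open MvPolynomial

theorem stmt_14
    (V : Submodule ℝ (MvPolynomial (Fin 2) ℝ))
    (hV : V = LinearMap.range
      (Polynomial.aeval (X 0 + X 1 : MvPolynomial (Fin 2) ℝ) :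
        Polynomial ℝ →ₐ[ℝ] MvPolynomial (Fin 2) ℝ).toLinearMap) :
    (∀ p ∈ V, ∀ y : Fin 2 → ℝ,
      bind₁ (fun i => (X i : MvPolynomial (Fin 2) ℝ) + C (y i)) p ∈ V) ∧
    ¬ FiniteDimensional ℝ (MvPolynomial (Fin 2) ℝ ⧸ V) := by
  subst hV
  constructor
  · rintro p ⟨q, rfl⟩ y
    refine ⟨q.comp (Polynomial.X + Polynomial.C (y 0 + y 1)), ?_⟩
    simp only [AlgHom.toLinearMap_apply, Polynomial.aeval_comp]
    rw [← Polynomial.aeval_algHom_apply]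
    simp [map_add, algebraMap_eq]
    ring_nf
  · intro hfin
    set Vr := LinearMap.range
      (Polynomial.aeval (X 0 + X 1 : MvPolynomial (Fin 2) ℝ) :
        Polynomial ℝ →ₐ[ℝ] MvPolynomial (Fin 2) ℝ).toLinearMap with hVr
    set v : ℕ → MvPolynomial (Fin 2) ℝ := fun n => X 0 ^ (n + 1) with hv
    have hvind : LinearIndependent ℝ v := by
      have hb := (MvPolynomial.basisMonomials (Fin 2) ℝ).linearIndependent
      have hinj : Function.Injective (fun n : ℕ => Finsupp.single (0 : Fin 2) (n + 1)) := by
        intro a b hab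
        simpa using congrArg (fun f : Fin 2 →₀ ℕ => f 0) hab
      have h2 := hb.comp _ hinj
      have hfun : v = ⇑(MvPolynomial.basisMonomials (Fin 2) ℝ) ∘
          (fun n : ℕ => Finsupp.single (0 : Fin 2) (n + 1)) := by
        funext n
        simp [hv, coe_basisMonomials, X_pow_eq_monomial]
      rw [hfun]
      exact h2
    -- the map aeval ![0, X] kills the span of v but is injective on Vr
    set φ : MvPolynomial (Fin 2) ℝ →ₐ[ℝ] Polynomial ℝ :=
      MvPolynomial.aeval ![0, Polynomial.X] with hφ
    have hdisj : Disjoint (Submodule.span ℝ (Set.range v)) Vr := by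
      rw [Submodule.disjoint_def]
      intro x hx hxV
      obtain ⟨q, hq⟩ := hxV
      have hspan : Submodule.span ℝ (Set.range v) ≤ LinearMap.ker φ.toLinearMap := by
        rw [Submodule.span_le]
        rintro _ ⟨n, rfl⟩
        simp [hv, hφ]
      have hφx : φ x = 0 := hspan hx
      have hφx2 : φ x = q := by
        rw [← hq]
        simp only [AlgHom.toLinearMap_apply, hφ]
        rw [← Polynomial.aeval_algHom_apply]
        simp [Polynomial.aeval_X_left_apply]
      have hq0 : q = 0 := by rw [← hφx2, hφx]
      rw [← hq, hq0]
      simp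
    have hind : LinearIndependent ℝ (Vr.mkQ ∘ v) :=
      hvind.map (by rw [Submodule.ker_mkQ]; exact hdisj)
    exact absurd hind.lt_aleph0_of_finiteDimensional (by simp)
end
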